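/- arXiv:2012.04730 — 4 statements merged into one kernel-verified Lean document; each statement's English description precedes it below -/
import Mathlib

section
/- The pointwise minimum μ(X) = min over all QZC rank functions r of r(X) is itself a QZC rank function, and hence is the unique minimum QZC rank function under the pointwise partial order. -/
open scoped BigOperators

/-- An order-`N` real tensor with mode sizes `I n`. -/
abbrev Tensor (N : ℕ) (I : Fin N → ℕ) : Type :=
  ((n : Fin N) → Fin (I n)) → ℝ

/-- A rank-one tensor is an outer product of nonzero vectors. -/
def IsRankOne {N : ℕ} {I : Fin N → ℕ} (X : Tensor N I) : Prop :=
  ∃ a : (n : Fin N) → Fin (I n) → ℝ, (∀ n, a n ≠ 0) ∧ ∀ i, X i = ∏ n, a n (i n)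

/-- The order-`N` identity tensor `I_{M,N}`: ones on the diagonal, zeros elsewhere. -/
def idTensor (M N : ℕ) : Tensor N (fun _ => M) :=
  fun i => if ∀ n m : Fin N, i n = i m then 1 else 0

/-- The matrix associated to a tensor of shape `I₁ × I₂ × 1 × ⋯ × 1`. -/
def assocMatrix {N : ℕ} {I : Fin N → ℕ} (h2 : 2 ≤ N)
    (h1 : ∀ n : Fin N, 2 ≤ n.val → I n = 1) (X : Tensor N I) :
    Matrix (Fin (I ⟨0, by omega⟩)) (Fin (I ⟨1, by omega⟩)) ℝ :=
  Matrix.of fun p q =>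
    X (fun m =>
      if e0 : m = ⟨0, by omega⟩ then Fin.cast (congrArg I e0.symm) p
      else if e1 : m = ⟨1, by omega⟩ then Fin.cast (congrArg I e1.symm) q
      else Fin.cast (h1 m (by
        have v0 : m.val ≠ 0 := fun hh => e0 (Fin.ext hh)
        have v1 : m.val ≠ 1 := fun hh => e1 (Fin.ext hh)
        omega)).symm 0)

/-- Permutation of the modes of a tensor. -/
def permute {N : ℕ} (I : Fin N → ℕ) (π : Equiv.Perm (Fin N)) (X : Tensor N I) :
    Tensor N (fun m => I (π m)) :=
  fun i => X (fun m => Fin.cast (congrArg I (π.apply_symm_apply m)) (i (π.symm m)))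

/-- `Y` is a subtensor of `X` : it is obtained by selecting, in each mode, an
increasing subset of the indices. -/
def IsSubtensor {N : ℕ} {J I : Fin N → ℕ} (Y : Tensor N J) (X : Tensor N I) : Prop :=
  ∃ f : (n : Fin N) → Fin (J n) → Fin (I n),
    (∀ n, StrictMono (f n)) ∧ ∀ i, Y i = X (fun n => f n (i n))

/-- The mode-`n` unfolding of a tensor, as a matrix whose columns are the
mode-`n` fibers. -/
def modeUnfold {N : ℕ} {I : Fin N → ℕ} (X : Tensor N I) (n : Fin N) :
    Matrix (Fin (I n)) ((m : {m : Fin N // m ≠ n}) → Fin (I m.1)) ℝ :=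
  Matrix.of fun p j =>
    X (fun m => if h : m = n then Fin.cast (congrArg I h.symm) p else j ⟨m, h⟩)

/-- The mode-`n` matrix product `X ×ₙ A`. -/
def modeMul {N : ℕ} {I : Fin N → ℕ} (X : Tensor N I) (n : Fin N) {J : ℕ}
    (A : Matrix (Fin J) (Fin (I n)) ℝ) : Tensor N (Function.update I n J) :=
  fun i => ∑ t : Fin (I n),
    A (Fin.cast (by simp) (i n)) t *
      X (fun m =>
        if h : m = n then Fin.cast (congrArg I h.symm) t
        else Fin.cast (by rw [Function.update_of_ne h]) (i m))

/-- Appending a trailing mode of dimension 1 to a tensor. -/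
def snocOne {N : ℕ} {I : Fin N → ℕ} (X : Tensor N I) :
    Tensor (N + 1) (Fin.snoc I 1) :=
  fun i => X (fun m => Fin.cast (by simp) (i m.castSucc))

/-- The matrix associated to a tensor all of whose modes other than `n₁, n₂`
have dimension 1 (a "submatrix" shape). -/
def twoModeMatrix {N : ℕ} {J : Fin N → ℕ} (Z : Tensor N J) (n₁ n₂ : Fin N)
    (h1 : ∀ m, m ≠ n₁ → m ≠ n₂ → J m = 1) : Matrix (Fin (J n₁)) (Fin (J n₂)) ℝ :=
  Matrix.of fun p q =>
    Z (fun m =>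
      if h : m = n₁ then Fin.cast (congrArg J h.symm) p
      else if h' : m = n₂ then Fin.cast (congrArg J h'.symm) q
      else Fin.cast (h1 m h h').symm 0)

/-- A rank function assigns a natural number to every real tensor. -/
def RankFun : Type :=
  ∀ (N : ℕ) (I : Fin N → ℕ), Tensor N I → ℕ

/-- The axioms (QZC1)–(QZC6) of Qi, Zhang and Chen for a tensor rank function. -/
structure IsQZCRankFn (r : RankFun) : Prop where
  zero_iff : ∀ (N : ℕ), 0 < N → ∀ (I : Fin N → ℕ) (X : Tensor N I),
    r N I X = 0 ↔ X = 0
  one_iff : ∀ (N : ℕ), 0 < N → ∀ (I : Fin N → ℕ) (X : Tensor N I),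
    r N I X = 1 ↔ IsRankOne X
  id_eq : ∀ (M N : ℕ), 2 ≤ N → r N (fun _ => M) (idTensor M N) = M
  matrix_eq : ∀ (N : ℕ) (h2 : 2 ≤ N) (I : Fin N → ℕ)
    (h1 : ∀ n : Fin N, 2 ≤ n.val → I n = 1) (X : Tensor N I),
    r N I X = (assocMatrix h2 h1 X).rank
  smul_eq : ∀ (N : ℕ), 0 < N → ∀ (I : Fin N → ℕ) (α : ℝ), α ≠ 0 →
    ∀ (X : Tensor N I), r N I (α • X) = r N I X
  perm_eq : ∀ (N : ℕ), 0 < N → ∀ (I : Fin N → ℕ) (π : Equiv.Perm (Fin N))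
    (X : Tensor N I), r N (fun m => I (π m)) (permute I π X) = r N I X
  subtensor_le : ∀ (N : ℕ), 0 < N → ∀ (I J : Fin N → ℕ) (X : Tensor N I)
    (Y : Tensor N J), IsSubtensor Y X → r N J Y ≤ r N I X

/-- The pointwise minimum of all QZC rank functions. -/
noncomputable def muRank : RankFun := fun N I X =>
  sInf {k | ∃ r : RankFun, IsQZCRankFn r ∧ r N I X = k}
set_option linter.unusedSectionVars false
open scoped BigOperators

section MatrixAux
variable {l m n o : Type*} [Fintype l] [Fintype m] [Fintype n] [Fintype o]
  [DecidableEq m] [DecidableEq n]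

lemma myrank_eq_zero_iff (A : Matrix m n ℝ) : A.rank = 0 ↔ A = 0 := by
  constructor
  · intro h
    have : LinearMap.range A.mulVecLin = ⊥ := by
      have := Submodule.finrank_eq_zero (R := ℝ) (S := LinearMap.range A.mulVecLin)
      exact this.mp h
    ext i j
    have hv : A.mulVec (Pi.single j 1) ∈ LinearMap.range A.mulVecLin := ⟨_, rfl⟩
    rw [this, Submodule.mem_bot] at hv
    have := congrFun hv i
    simpa [Matrix.mulVec_single] using this
  · rintro rfl; exact Matrix.rank_zero

lemma myrank_submatrix_le (A : Matrix m n ℝ) (f : l → m) (g : o → n) :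
    (A.submatrix f g).rank ≤ A.rank := by
  have hEq : A.submatrix f g =
      (Matrix.of fun (i : l) (a : m) => if a = f i then (1:ℝ) else 0) * A *
      (Matrix.of fun (b : n) (k : o) => if b = g k then (1:ℝ) else 0) := by
    ext i k
    simp [Matrix.mul_apply, Finset.sum_ite_eq, ite_mul, mul_ite]
  rw [hEq]
  calc (((Matrix.of fun (i : l) (a : m) => if a = f i then (1:ℝ) else 0) * A) *
      (Matrix.of fun (b : n) (k : o) => if b = g k then (1:ℝ) else 0)).rank
      ≤ ((Matrix.of fun (i : l) (a : m) => if a = f i then (1:ℝ) else 0) * A).rank :=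
        Matrix.rank_mul_le_left _ _
    _ ≤ A.rank := Matrix.rank_mul_le_right _ _

lemma myrank_outer_le_one (u : m → ℝ) (w : n → ℝ) : (Matrix.vecMulVec u w).rank ≤ 1 := by
  rw [Matrix.vecMulVec_eq (Fin 1)]
  refine le_trans (Matrix.rank_mul_le_left _ _) ?_
  exact (Matrix.rank_le_card_width (Matrix.replicateCol (Fin 1) u)).trans (by simp)

lemma myrank_smul (A : Matrix m n ℝ) {α : ℝ} (hα : α ≠ 0) : (α • A).rank = A.rank := by
  have h1 : ∀ (β : ℝ) (B : Matrix m n ℝ), (β • B).rank ≤ B.rank := by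
    intro β B
    have : β • B = (β • (1 : Matrix m m ℝ)) * B := by
      ext i j; simp [Matrix.mul_apply, Matrix.one_apply, ite_mul, mul_ite]
    rw [this]; exact Matrix.rank_mul_le_right _ _
  refine le_antisymm (h1 _ _) ?_
  have := h1 α⁻¹ (α • A)
  rwa [smul_smul, inv_mul_cancel₀ hα, one_smul] at this
end MatrixAux

section TensorAux
variable {N : ℕ} {I : Fin N → ℕ}

lemma modeUnfold_apply_update (X : Tensor N I) (n : Fin N)
    (i : (m : Fin N) → Fin (I m)) (p : Fin (I n)) :
    modeUnfold X n p (fun m => i m.1) = X (Function.update i n p) := by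
  unfold modeUnfold
  simp only [Matrix.of_apply]
  congr 1
  funext m
  by_cases h : m = n
  · subst h
    simp [Function.update_self]
  · simp [h, Function.update_of_ne h]

lemma modeUnfold_apply_self (X : Tensor N I) (n : Fin N)
    (i : (m : Fin N) → Fin (I m)) :
    modeUnfold X n (i n) (fun m => i m.1) = X i := by
  rw [modeUnfold_apply_update, Function.update_eq_self]

lemma modeUnfold_eq_zero_iff (X : Tensor N I) (n : Fin N) :
    modeUnfold X n = 0 ↔ X = 0 := by
  constructor
  · intro h
    funext i
    have := congrFun (congrFun h (i n)) (fun m => i m.1)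
    rwa [modeUnfold_apply_self] at this
  · rintro rfl
    funext p j
    simp [modeUnfold]
end TensorAux
section ExchangeAux
variable {N : ℕ} {I : Fin N → ℕ}

lemma tensor_exchange (X : Tensor N I) (n : Fin N)
    (h : (modeUnfold X n).rank ≤ 1) (u v : (m : Fin N) → Fin (I m)) :
    X u * X v = X (Function.update u n (v n)) * X (Function.update v n (u n)) := by
  set A := modeUnfold X n with hA
  set B := A.submatrix ![u n, v n]
      ![fun m => u m.1, fun m => v m.1] with hB
  have hrank : B.rank ≤ 1 := le_trans (myrank_submatrix_le _ _ _) h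
  have hdet : B.det = 0 := by
    by_contra hd
    have hu : IsUnit B := (Matrix.isUnit_iff_isUnit_det B).mpr (isUnit_iff_ne_zero.mpr hd)
    have := Matrix.rank_of_isUnit B hu
    rw [this] at hrank
    simp at hrank
  have e00 : B 0 0 = X u := by
    show A (u n) (fun m => u m.1) = X u
    exact modeUnfold_apply_self X n u
  have e11 : B 1 1 = X v := by
    show A (v n) (fun m => v m.1) = X v
    exact modeUnfold_apply_self X n v
  have e01 : B 0 1 = X (Function.update v n (u n)) := by
    show A (u n) (fun m => v m.1) = _
    exact modeUnfold_apply_update X n v (u n)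
  have e10 : B 1 0 = X (Function.update u n (v n)) := by
    show A (v n) (fun m => u m.1) = _
    exact modeUnfold_apply_update X n u (v n)
  have := Matrix.det_fin_two B
  rw [hdet, e00, e11, e01, e10] at this
  linarith [this]

lemma isRankOne_of_unfold_rank_le_one {X : Tensor N I} (hN : 0 < N) (hX : X ≠ 0)
    (h : ∀ n, (modeUnfold X n).rank ≤ 1) : IsRankOne X := by
  obtain ⟨i0, hi0⟩ : ∃ i0, X i0 ≠ 0 := by
    by_contra hc
    push_neg at hc
    exact hX (funext hc)
  have key : ∀ (i : (m : Fin N) → Fin (I m)) (S : Finset (Fin N)),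
      X (fun n => if n ∈ S then i n else i0 n) * X i0 ^ S.card =
      X i0 * ∏ n ∈ S, X (Function.update i0 n (i n)) := by
    intro i
    intro S
    induction S using Finset.induction_on with
    | empty => simp
    | @insert a S ha IH =>
      set mS := (fun n => if n ∈ S then i n else i0 n) with hmS
      have hmix : (fun n => if n ∈ insert a S then i n else i0 n)
          = Function.update mS a (i a) := by
        funext n
        by_cases hn : n = a
        · subst hn; simp [Function.update_self, hmS, ha]
        · simp [Function.update_of_ne hn, hmS, Finset.mem_insert, hn]
      have hex := tensor_exchange X a (h a) mS (Function.update i0 a (i a))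
      have h1 : Function.update mS a (Function.update i0 a (i a) a)
          = Function.update mS a (i a) := by rw [Function.update_self]
      have h2 : Function.update (Function.update i0 a (i a)) a (mS a) = i0 := by
        rw [Function.update_idem, hmS]
        simp [ha]
      rw [h1, h2] at hex
      rw [hmix, Finset.card_insert_of_notMem ha, Finset.prod_insert ha]
      calc X (Function.update mS a (i a)) * X i0 ^ (S.card + 1)
          = (X (Function.update mS a (i a)) * X i0) * X i0 ^ S.card := by ring
        _ = (X mS * X (Function.update i0 a (i a))) * X i0 ^ S.card := by rw [← hex]
        _ = X (Function.update i0 a (i a)) * (X mS * X i0 ^ S.card) := by ring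
        _ = X (Function.update i0 a (i a)) * (X i0 * ∏ n ∈ S, X (Function.update i0 n (i n))) := by
            rw [IH]
        _ = X i0 * (X (Function.update i0 a (i a)) * ∏ n ∈ S, X (Function.update i0 n (i n))) := by
            ring
  have keyU : ∀ (i : (m : Fin N) → Fin (I m)),
      X i * X i0 ^ N = X i0 * ∏ n, X (Function.update i0 n (i n)) := by
    intro i
    have := key i Finset.univ
    simpa using this
  set n0 : Fin N := ⟨0, hN⟩ with hn0
  set c : ℝ := X i0 * (X i0 ^ N)⁻¹ with hc
  refine ⟨fun n p => X (Function.update i0 n p) * (if n = n0 then c else 1), ?_, ?_⟩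
  · intro n
    intro hz
    have this : X (Function.update i0 n (i0 n)) * (if n = n0 then c else 1) = 0 :=
      congrFun hz (i0 n)
    rw [Function.update_eq_self] at this
    have hcne : c ≠ 0 := mul_ne_zero hi0 (inv_ne_zero (pow_ne_zero _ hi0))
    by_cases hn : n = n0 <;> simp [hn, hcne] at this <;> exact hi0 this
  · intro i
    have hsplit : ∏ n, (X (Function.update i0 n (i n)) * (if n = n0 then c else 1))
        = (∏ n, X (Function.update i0 n (i n))) * c := by
      rw [Finset.prod_mul_distrib]
      congr 1
      simp
    rw [hsplit]
    have hk := keyU i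
    have hpow : X i0 ^ N ≠ 0 := pow_ne_zero _ hi0
    have hXi : X i = X i0 * (∏ n, X (Function.update i0 n (i n))) / X i0 ^ N := by
      rw [eq_div_iff hpow, hk]
    rw [hXi, hc]; ring

lemma prod_erase_eq_subtype {α : Type*} [Fintype α] [DecidableEq α] (n : α) (f : α → ℝ) :
    ∏ x ∈ Finset.univ.erase n, f x = ∏ m : {m // m ≠ n}, f m.1 :=
  Finset.prod_subtype _ (by simp) f

lemma modeUnfold_isRankOne {X : Tensor N I} (hr : IsRankOne X) (n : Fin N) :
    (modeUnfold X n).rank = 1 := by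
  obtain ⟨a, ha, hXa⟩ := hr
  set w : ((m : {m : Fin N // m ≠ n}) → Fin (I m.1)) → ℝ :=
    fun j => ∏ m : {m : Fin N // m ≠ n}, a m.1 (j m) with hw
  have hU : modeUnfold X n = Matrix.vecMulVec (a n) w := by
    ext p j
    rw [Matrix.vecMulVec_apply]
    show X _ = _
    rw [hXa]
    rw [← Finset.mul_prod_erase Finset.univ _ (Finset.mem_univ n)]
    congr 1
    · simp
    · show _ = ∏ m : {m : Fin N // m ≠ n}, a m.1 (j m)
      rw [prod_erase_eq_subtype n
        (fun x => a x (if h : x = n then Fin.cast (congrArg I h.symm) p else j ⟨x, h⟩))]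
      refine Finset.prod_congr rfl fun m _ => ?_
      rw [dif_neg m.2]
  have hle : (modeUnfold X n).rank ≤ 1 := by rw [hU]; exact myrank_outer_le_one _ _
  have hne : modeUnfold X n ≠ 0 := by
    rw [Ne, modeUnfold_eq_zero_iff]
    intro h0
    obtain ⟨p0, hp0⟩ := Function.ne_iff.mp (ha n)
    have hx : ∀ m : Fin N, ∃ q, a m q ≠ 0 := fun m => Function.ne_iff.mp (ha m)
    choose jx hjx using hx
    set istar : (m : Fin N) → Fin (I m) := fun m =>
      if h : m = n then Fin.cast (congrArg I h.symm) p0 else jx m with histar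
    have : X istar = 0 := by rw [h0]; rfl
    rw [hXa] at this
    have hprod : ∏ m, a m (istar m) ≠ 0 := by
      apply Finset.prod_ne_zero_iff.mpr
      intro m _
      by_cases h : m = n
      · subst h
        simpa [histar] using hp0
      · simpa [histar, h] using hjx m
    exact hprod this
  have := (not_iff_not.mpr (myrank_eq_zero_iff (modeUnfold X n))).mpr hne
  omega

lemma myrank_submatrix_equiv {l m n o : Type*} [Fintype l] [Fintype m] [Fintype n] [Fintype o]
    [DecidableEq m] [DecidableEq n] [DecidableEq l] [DecidableEq o]
    (A : Matrix m n ℝ) (e : l ≃ m) (g : o ≃ n) :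
    (A.submatrix e g).rank = A.rank := by
  refine le_antisymm (myrank_submatrix_le _ _ _) ?_
  have : A = (A.submatrix e g).submatrix e.symm g.symm := by
    ext i k; simp
  calc A.rank = ((A.submatrix e g).submatrix e.symm g.symm).rank := by rw [← this]
    _ ≤ (A.submatrix e g).rank := myrank_submatrix_le _ _ _

/-- The candidate minimal QZC rank function: max over modes of unfolding rank. -/
noncomputable def maxUnfoldRank : RankFun := fun N I X =>
  Finset.univ.sup fun n : Fin N => (modeUnfold X n).rank

lemma modeUnfold_smul (X : Tensor N I) (n : Fin N) (α : ℝ) :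
    modeUnfold (α • X) n = α • modeUnfold X n := by
  ext p j
  show (α • X) _ = α • (X _)
  rfl

lemma modeUnfold_subtensor {J : Fin N → ℕ} {X : Tensor N I} {Y : Tensor N J}
    (h : IsSubtensor Y X) (n : Fin N) :
    (modeUnfold Y n).rank ≤ (modeUnfold X n).rank := by
  obtain ⟨f, _, hYX⟩ := h
  have hEq : modeUnfold Y n = (modeUnfold X n).submatrix (f n)
      (fun j (m : {m : Fin N // m ≠ n}) => f m.1 (j m)) := by
    ext p j
    show Y _ = X _
    rw [hYX]
    congr 1
    funext m
    by_cases h : m = n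
    · subst h
      simp
    · simp [h]
  rw [hEq]
  exact myrank_submatrix_le _ _ _

lemma modeUnfold_idTensor_rank {M Nn : ℕ} (h2 : 2 ≤ Nn) (n : Fin Nn) :
    (modeUnfold (idTensor M Nn) n).rank = M := by
  set A := modeUnfold (idTensor M Nn) n with hA
  set m' : Fin Nn := if n.val = 0 then ⟨1, by omega⟩ else ⟨0, by omega⟩ with hm'
  have hm'n : m' ≠ n := by
    rw [hm']
    split_ifs with h
    · intro he; rw [← he] at h; simp at h
    · intro he; rw [← he] at h; simp at h
  have key : ∀ (p q : Fin M),
      A p (fun _ => q) = if p = q then (1:ℝ) else 0 := by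
    intro p q
    show idTensor M Nn _ = _
    unfold idTensor
    congr 1
    simp only [eq_iff_iff]
    constructor
    · intro hall
      have h1 := hall n m'
      rw [dif_pos rfl, dif_neg hm'n] at h1
      exact Fin.ext (by simpa using congrArg Fin.val h1)
    · intro hpq a b
      subst hpq
      apply Fin.ext
      by_cases hha : a = n <;> by_cases hhb : b = n <;> simp [hha, hhb]
  have hle : A.rank ≤ M := by
    have := Matrix.rank_le_card_height A
    simpa using this
  have hge : M ≤ A.rank := by
    have hsub : A.submatrix id (fun q : Fin M => (fun _ => q :
        (m : {m : Fin Nn // m ≠ n}) → Fin M)) = (1 : Matrix (Fin M) (Fin M) ℝ) := by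
      ext p q
      simp only [Matrix.submatrix_apply, id_eq]
      rw [key p q, Matrix.one_apply]
    have h1 : (A.submatrix id (fun q : Fin M => (fun _ => q :
        (m : {m : Fin Nn // m ≠ n}) → Fin M))).rank = M := by
      rw [hsub]; simp
    calc M = _ := h1.symm
      _ ≤ A.rank := myrank_submatrix_le _ _ _
  omega

lemma maxUnfoldRank_idTensor {M Nn : ℕ} (h2 : 2 ≤ Nn) :
    maxUnfoldRank Nn (fun _ => M) (idTensor M Nn) = M := by
  unfold maxUnfoldRank
  apply le_antisymm
  · exact Finset.sup_le fun n _ => (modeUnfold_idTensor_rank h2 n).le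
  · calc M = (modeUnfold (idTensor M Nn) ⟨0, by omega⟩).rank :=
        (modeUnfold_idTensor_rank h2 _).symm
      _ ≤ _ := Finset.le_sup (f := fun n => (modeUnfold (idTensor M Nn) n).rank)
        (Finset.mem_univ (⟨0, by omega⟩ : Fin Nn))

section MatrixEq
variable {N : ℕ} {I : Fin N → ℕ}

/-- The column-index equivalence for the unfolding at mode `na`, when all modes
other than `na, nb` are trivial. -/
noncomputable def colEquiv (na nb : Fin N) (hab : na ≠ nb)
    (hI1 : ∀ m, m ≠ na → m ≠ nb → I m = 1) :
    Fin (I nb) ≃ ((m : {m : Fin N // m ≠ na}) → Fin (I m.1)) where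
  toFun q := fun m => if h : m.1 = nb then Fin.cast (congrArg I h.symm) q
    else Fin.cast (hI1 m.1 m.2 h).symm 0
  invFun j := j ⟨nb, fun h => hab h.symm⟩
  left_inv q := by simp
  right_inv j := by
    funext m
    by_cases h : m.1 = nb
    · have hm : m = ⟨nb, fun hh => hab hh.symm⟩ := Subtype.ext h
      subst hm
      simp
    · show dite _ _ _ = _
      rw [dif_neg h]
      apply Fin.ext
      have h2 := (j m).isLt
      have h3 := hI1 m.1 m.2 h
      simp only [Fin.coe_cast, Fin.val_zero]
      omega

lemma modeUnfold_eq_twoMode (X : Tensor N I) (na nb : Fin N) (hab : na ≠ nb)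
    (hI1 : ∀ m, m ≠ na → m ≠ nb → I m = 1) :
    (modeUnfold X na).rank = (twoModeMatrix X na nb hI1).rank := by
  have hEq : twoModeMatrix X na nb hI1 =
      (modeUnfold X na).submatrix (Equiv.refl _) (colEquiv na nb hab hI1) := by
    ext p q
    show X _ = X _
    congr 1
  rw [hEq, myrank_submatrix_equiv]

lemma twoModeMatrix_transpose (X : Tensor N I) (na nb : Fin N) (hab : na ≠ nb)
    (hI1 : ∀ m, m ≠ na → m ≠ nb → I m = 1) :
    twoModeMatrix X nb na (fun m h h' => hI1 m h' h) =
      (twoModeMatrix X na nb hI1).transpose := by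
  ext q p
  show X _ = X _
  congr 1
  funext m
  by_cases h : m = na
  · subst h
    rw [dif_neg hab, dif_pos rfl, dif_pos rfl]
  · by_cases h' : m = nb
    · subst h'
      rw [dif_pos rfl, dif_neg h, dif_pos rfl]
    · rw [dif_neg h', dif_neg h, dif_neg h, dif_neg h']

lemma twoModeMatrix_apply_self (X : Tensor N I) (na nb : Fin N) (hab : na ≠ nb)
    (hI1 : ∀ m, m ≠ na → m ≠ nb → I m = 1) (i : (m : Fin N) → Fin (I m)) :
    twoModeMatrix X na nb hI1 (i na) (i nb) = X i := by
  show X _ = X i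
  congr 1
  funext m
  by_cases h : m = na
  · subst h
    rw [dif_pos rfl]
    apply Fin.ext
    simp
  · by_cases h' : m = nb
    · subst h'
      rw [dif_neg h, dif_pos rfl]
      apply Fin.ext
      simp
    · rw [dif_neg h, dif_neg h']
      apply Fin.ext
      have h2 := (i m).isLt
      have h3 := hI1 m h h'
      simp only [Fin.coe_cast, Fin.val_zero]
      omega

lemma twoModeMatrix_eq_zero_iff (X : Tensor N I) (na nb : Fin N) (hab : na ≠ nb)
    (hI1 : ∀ m, m ≠ na → m ≠ nb → I m = 1) :
    twoModeMatrix X na nb hI1 = 0 ↔ X = 0 := by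
  constructor
  · intro h
    funext i
    have := congrFun (congrFun h (i na)) (i nb)
    rw [twoModeMatrix_apply_self X na nb hab hI1 i] at this
    simpa using this
  · rintro rfl
    funext p q
    unfold twoModeMatrix
    simp

end MatrixEq

section PermAux
variable {N : ℕ} {I : Fin N → ℕ}

lemma modeUnfold_rank_congr (X : Tensor N I) {n1 n2 : Fin N} (h : n1 = n2) :
    (modeUnfold X n1).rank = (modeUnfold X n2).rank := by subst h; rfl

lemma modeUnfold_permute_rank (π : Equiv.Perm (Fin N)) (X : Tensor N I) (m0 : Fin N) :
    (modeUnfold (permute I π X) m0).rank = (modeUnfold X (π m0)).rank := by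
  set Y := permute I π X with hY
  have key : ∀ (j : (k : {k : Fin N // k ≠ π m0}) → Fin (I k.1))
      (k1 k2 : {k : Fin N // k ≠ π m0}) (h : k1 = k2), (j k1).val = (j k2).val := by
    rintro j k1 k2 rfl; rfl
  apply le_antisymm
  · -- unfold Y m0 is a submatrix of unfold X (π m0)
    have hEq : modeUnfold Y m0 = (modeUnfold X (π m0)).submatrix id
        (fun (j : (m : {m : Fin N // m ≠ m0}) → Fin (I (π m.1)))
          (k : {k : Fin N // k ≠ π m0}) =>
          Fin.cast (congrArg I (π.apply_symm_apply k.1))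
            (j ⟨π.symm k.1, fun h => k.2 ((π.apply_symm_apply k.1).symm.trans (congrArg π h))⟩)) := by
      ext p j
      simp only [Matrix.submatrix_apply, id_eq]
      unfold modeUnfold
      simp only [Matrix.of_apply]
      rw [hY]
      unfold permute
      congr 1
      funext k
      by_cases h : k = π m0
      · subst h
        dsimp only
        rw [dif_pos (π.symm_apply_apply m0), dif_pos rfl]
        apply Fin.ext
        simp
      · dsimp only
        rw [dif_neg (fun hh : π.symm k = m0 => h ((π.apply_symm_apply k).symm.trans (congrArg π hh))), dif_neg h]
    rw [hEq]
    exact myrank_submatrix_le _ _ _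
  · have hEq : modeUnfold X (π m0) = (modeUnfold Y m0).submatrix id
        (fun (j : (k : {k : Fin N // k ≠ π m0}) → Fin (I k.1))
          (m : {m : Fin N // m ≠ m0}) =>
          (j ⟨π m.1, fun h => m.2 (π.injective h)⟩ :
            Fin (I (π m.1)))) := by
      ext p j
      simp only [Matrix.submatrix_apply, id_eq]
      unfold modeUnfold
      simp only [Matrix.of_apply]
      rw [hY]
      unfold permute
      congr 1
      funext k
      by_cases h : k = π m0
      · subst h
        dsimp only
        rw [dif_pos rfl, dif_pos (π.symm_apply_apply m0)]
        apply Fin.ext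
        simp
      · dsimp only
        rw [dif_neg h, dif_neg (fun hh : π.symm k = m0 => h ((π.apply_symm_apply k).symm.trans (congrArg π hh)))]
        apply Fin.ext
        rw [Fin.coe_cast]
        exact (key j _ _ (Subtype.ext (by simp))).symm
    rw [hEq]
    exact myrank_submatrix_le _ _ _

lemma maxUnfoldRank_perm (π : Equiv.Perm (Fin N)) (X : Tensor N I) :
    maxUnfoldRank N (fun m => I (π m)) (permute I π X) = maxUnfoldRank N I X := by
  unfold maxUnfoldRank
  apply le_antisymm
  · refine Finset.sup_le fun m0 _ => ?_
    rw [modeUnfold_permute_rank π X m0]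
    exact Finset.le_sup (f := fun n => (modeUnfold X n).rank) (Finset.mem_univ (π m0))
  · refine Finset.sup_le fun n _ => ?_
    have h := (modeUnfold_permute_rank π X (π.symm n)).trans
      (modeUnfold_rank_congr X (π.apply_symm_apply n))
    rw [← h]
    exact Finset.le_sup (f := fun m => (modeUnfold (permute I π X) m).rank)
      (Finset.mem_univ (π.symm n))
end PermAux

lemma maxUnfoldRank_zero {N : ℕ} {I : Fin N → ℕ} :
    maxUnfoldRank N I (0 : Tensor N I) = 0 := by
  unfold maxUnfoldRank
  refine Nat.eq_zero_of_le_zero (Finset.sup_le fun n _ => ?_)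
  rw [(modeUnfold_eq_zero_iff (0 : Tensor N I) n).mpr rfl]
  simp

set_option maxHeartbeats 2000000 in
theorem maxUnfoldRank_isQZC : IsQZCRankFn maxUnfoldRank := by
  constructor
  · -- zero_iff
    intro N hN I X
    constructor
    · intro h
      have hle : (modeUnfold X ⟨0, hN⟩).rank ≤ maxUnfoldRank N I X :=
        Finset.le_sup (f := fun n => (modeUnfold X n).rank)
          (Finset.mem_univ (⟨0, hN⟩ : Fin N))
      rw [h] at hle
      exact (modeUnfold_eq_zero_iff X _).mp
        ((myrank_eq_zero_iff _).mp (Nat.le_zero.mp hle))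
    · rintro rfl
      exact maxUnfoldRank_zero
  · -- one_iff
    intro N hN I X
    constructor
    · intro h
      have hle : ∀ n, (modeUnfold X n).rank ≤ 1 := by
        intro n
        have hle' : (modeUnfold X n).rank ≤ maxUnfoldRank N I X :=
          Finset.le_sup (f := fun n => (modeUnfold X n).rank) (Finset.mem_univ n)
        rw [h] at hle'
        exact hle'
      have hX : X ≠ 0 := by
        rintro rfl
        rw [maxUnfoldRank_zero] at h
        exact absurd h (by omega)
      exact isRankOne_of_unfold_rank_le_one hN hX hle
    · intro hr
      apply le_antisymm
      · exact Finset.sup_le fun n _ => (modeUnfold_isRankOne hr n).le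
      · calc 1 = (modeUnfold X ⟨0, hN⟩).rank := (modeUnfold_isRankOne hr _).symm
          _ ≤ _ := Finset.le_sup (f := fun n => (modeUnfold X n).rank)
              (Finset.mem_univ (⟨0, hN⟩ : Fin N))
  · -- id_eq
    intro M Nn h2
    exact maxUnfoldRank_idTensor h2
  · -- matrix_eq
    intro N h2 I h1 X
    have hab : (⟨0, by omega⟩ : Fin N) ≠ ⟨1, by omega⟩ := by
      intro h
      have := congrArg Fin.val h
      simp at this
    have hI1 : ∀ m : Fin N, m ≠ ⟨0, by omega⟩ → m ≠ ⟨1, by omega⟩ → I m = 1 := by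
      intro m hm0 hm1
      refine h1 m ?_
      have hv0 : m.val ≠ 0 := fun hv => hm0 (Fin.ext (by simpa using hv))
      have hv1 : m.val ≠ 1 := fun hv => hm1 (Fin.ext (by simpa using hv))
      omega
    have hAssoc : assocMatrix h2 h1 X =
        twoModeMatrix X ⟨0, by omega⟩ ⟨1, by omega⟩ hI1 := by
      ext p q
      show X _ = X _
      congr 1
    set R := (twoModeMatrix X ⟨0, by omega⟩ ⟨1, by omega⟩ hI1).rank with hR
    have h0r : (modeUnfold X ⟨0, by omega⟩).rank = R :=
      modeUnfold_eq_twoMode X _ _ hab hI1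
    have h1r : (modeUnfold X ⟨1, by omega⟩).rank = R :=
      calc (modeUnfold X ⟨1, by omega⟩).rank
          = (twoModeMatrix X ⟨1, by omega⟩ ⟨0, by omega⟩
              (fun m h h' => hI1 m h' h)).rank :=
            modeUnfold_eq_twoMode X _ _ (Ne.symm hab) (fun m h h' => hI1 m h' h)
        _ = ((twoModeMatrix X ⟨0, by omega⟩ ⟨1, by omega⟩ hI1).transpose).rank :=
            congrArg Matrix.rank
              (twoModeMatrix_transpose X ⟨0, by omega⟩ ⟨1, by omega⟩ hab hI1)
        _ = R := Matrix.rank_transpose _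
    have hother : ∀ n : Fin N, (modeUnfold X n).rank ≤ R := by
      intro n
      by_cases hm0 : n = ⟨0, by omega⟩
      · subst hm0; exact h0r.le
      by_cases hm1 : n = ⟨1, by omega⟩
      · subst hm1; exact h1r.le
      by_cases hX : X = 0
      · subst hX
        rw [(modeUnfold_eq_zero_iff (0 : Tensor N I) n).mpr rfl]
        simp
      · have hle1 : (modeUnfold X n).rank ≤ 1 := by
          have hh := Matrix.rank_le_card_height (modeUnfold X n)
          simpa [hI1 n hm0 hm1] using hh
        have hge1 : 1 ≤ R := by
          have hnz : twoModeMatrix X ⟨0, by omega⟩ ⟨1, by omega⟩ hI1 ≠ 0 :=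
            fun hz => hX ((twoModeMatrix_eq_zero_iff X _ _ hab hI1).mp hz)
          have := (not_iff_not.mpr (myrank_eq_zero_iff _)).mpr hnz
          omega
        omega
    rw [hAssoc, ← hR]
    apply le_antisymm
    · exact Finset.sup_le fun n _ => hother n
    · rw [← h0r]
      exact Finset.le_sup (f := fun n => (modeUnfold X n).rank)
        (Finset.mem_univ (⟨0, by omega⟩ : Fin N))
  · -- smul_eq
    intro N hN I α hα X
    exact Finset.sup_congr rfl fun n _ => by rw [modeUnfold_smul, myrank_smul _ hα]
  · -- perm_eq
    intro N hN I π X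
    exact maxUnfoldRank_perm π X
  · -- subtensor_le
    intro N hN I J X Y hsub
    exact Finset.sup_le fun n _ => le_trans (modeUnfold_subtensor hsub n)
      (Finset.le_sup (f := fun n => (modeUnfold X n).rank) (Finset.mem_univ n))

lemma muRank_mem (N : ℕ) (I : Fin N → ℕ) (X : Tensor N I) :
    ∃ r : RankFun, IsQZCRankFn r ∧ r N I X = muRank N I X := by
  have h : muRank N I X ∈ {k | ∃ r : RankFun, IsQZCRankFn r ∧ r N I X = k} :=
    Nat.sInf_mem ⟨maxUnfoldRank N I X, maxUnfoldRank, maxUnfoldRank_isQZC, rfl⟩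
  exact h

lemma muRank_le (r : RankFun) (hr : IsQZCRankFn r) (N : ℕ) (I : Fin N → ℕ)
    (X : Tensor N I) : muRank N I X ≤ r N I X :=
  Nat.sInf_le ⟨r, hr, rfl⟩


/-- The pointwise minimum `μ` over all QZC rank functions is itself a QZC rank
function, hence the unique minimum QZC rank function for the pointwise order. -/
theorem muRank_isQZC_and_minimum :
    IsQZCRankFn muRank ∧
    (∀ r : RankFun, IsQZCRankFn r →
      ∀ (N : ℕ) (I : Fin N → ℕ) (X : Tensor N I), muRank N I X ≤ r N I X) ∧
    (∀ m : RankFun, IsQZCRankFn m →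
      (∀ r : RankFun, IsQZCRankFn r →
        ∀ (N : ℕ) (I : Fin N → ℕ) (X : Tensor N I), m N I X ≤ r N I X) →
      m = muRank) := by
  have hQ := maxUnfoldRank_isQZC
  have hisQZC : IsQZCRankFn muRank := by
    constructor
    · -- zero_iff
      intro N hN I X
      constructor
      · intro h
        obtain ⟨r, hr, hrX⟩ := muRank_mem N I X
        rw [h] at hrX
        exact (hr.zero_iff N hN I X).mp hrX
      · rintro rfl
        have h1 := muRank_le maxUnfoldRank hQ N I 0
        rw [(hQ.zero_iff N hN I 0).mpr rfl] at h1
        omega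
    · -- one_iff
      intro N hN I X
      constructor
      · intro h
        obtain ⟨r, hr, hrX⟩ := muRank_mem N I X
        rw [h] at hrX
        exact (hr.one_iff N hN I X).mp hrX
      · intro hr1
        obtain ⟨r, hr, hrX⟩ := muRank_mem N I X
        rw [← hrX]
        exact (hr.one_iff N hN I X).mpr hr1
    · -- id_eq
      intro M N h2
      obtain ⟨r, hr, hrX⟩ := muRank_mem N (fun _ => M) (idTensor M N)
      rw [← hrX]
      exact hr.id_eq M N h2
    · -- matrix_eq
      intro N h2 I h1 X
      obtain ⟨r, hr, hrX⟩ := muRank_mem N I X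
      rw [← hrX]
      exact hr.matrix_eq N h2 I h1 X
    · -- smul_eq
      intro N hN I α hα X
      apply le_antisymm
      · obtain ⟨r, hr, hrX⟩ := muRank_mem N I X
        calc muRank N I (α • X) ≤ r N I (α • X) := muRank_le r hr N I (α • X)
          _ = r N I X := hr.smul_eq N hN I α hα X
          _ = muRank N I X := hrX
      · obtain ⟨r, hr, hrX⟩ := muRank_mem N I (α • X)
        calc muRank N I X ≤ r N I X := muRank_le r hr N I X
          _ = r N I (α • X) := (hr.smul_eq N hN I α hα X).symm
          _ = muRank N I (α • X) := hrX
    · -- perm_eq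
      intro N hN I π X
      apply le_antisymm
      · obtain ⟨r, hr, hrX⟩ := muRank_mem N I X
        calc muRank N (fun m => I (π m)) (permute I π X)
            ≤ r N (fun m => I (π m)) (permute I π X) := muRank_le r hr N _ _
          _ = r N I X := hr.perm_eq N hN I π X
          _ = muRank N I X := hrX
      · obtain ⟨r, hr, hrX⟩ := muRank_mem N (fun m => I (π m)) (permute I π X)
        calc muRank N I X ≤ r N I X := muRank_le r hr N I X
          _ = r N (fun m => I (π m)) (permute I π X) := (hr.perm_eq N hN I π X).symm
          _ = muRank N (fun m => I (π m)) (permute I π X) := hrX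
    · -- subtensor_le
      intro N hN I J X Y hsub
      obtain ⟨r, hr, hrX⟩ := muRank_mem N I X
      calc muRank N J Y ≤ r N J Y := muRank_le r hr N J Y
        _ ≤ r N I X := hr.subtensor_le N hN I J X Y hsub
        _ = muRank N I X := hrX
  refine ⟨hisQZC, muRank_le, ?_⟩
  intro m hm hmin
  funext N I X
  exact le_antisymm (hmin muRank hisQZC N I X) (muRank_le m hm N I X)
end ExchangeAux
end

section
/- Let X ∈ ℝ^{I₁×⋯×I_N} be nonzero and let R = rank(X_(n)). If j₁ < ⋯ < j_R index R linearly independent rows of the mode-n unfolding X_(n), and A ∈ ℝ^{R×I_n} is the selection matrix with a_{st} = 1 if t = j_s and 0 otherwise, then Y = X ×_n A is a subtensor of X satisfying rank(Y_(m)) = rank(X_(m)) for all modes m with 1 ≤ m ≤ N. -/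
open scoped BigOperators

section Aux

variable {N : ℕ} {I : Fin N → ℕ} {n : Fin N} {R : ℕ}

/-- The index-selection map induced by `f` in mode `n` (identity in other modes). -/
def selF (I : Fin N → ℕ) (n : Fin N) (R : ℕ) (f : Fin R → Fin (I n)) :
    (m : Fin N) → Fin (Function.update I n R m) → Fin (I m) :=
  fun m i =>
    if h : m = n then
      Fin.cast (congrArg I h.symm)
        (f (Fin.cast (by rw [h, Function.update_self]) i))
    else Fin.cast (Function.update_of_ne h R I) i

lemma selF_strictMono {f : Fin R → Fin (I n)} (hf : StrictMono f) (m : Fin N) :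
    StrictMono (selF I n R f m) := by
  intro a b hab
  unfold selF
  split
  · next h =>
      subst h
      exact hf hab
  · exact hab

lemma modeMul_sel_apply (X : Tensor N I) (f : Fin R → Fin (I n))
    (i : (m : Fin N) → Fin (Function.update I n R m)) :
    modeMul X n (Matrix.of fun s t => if t = f s then (1 : ℝ) else 0) i
      = X (fun m => selF I n R f m (i m)) := by
  unfold modeMul
  simp only [Matrix.of_apply, ite_mul, one_mul, zero_mul, Finset.sum_ite_eq',
    Finset.mem_univ, if_true]
  congr 1
  funext m
  by_cases h : m = n
  · subst h
    rw [dif_pos rfl]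
    unfold selF
    rw [dif_pos rfl]
  · rw [dif_neg h]
    unfold selF
    rw [dif_neg h]

lemma modeUnfold_modeMul_sel (X : Tensor N I) (f : Fin R → Fin (I n)) (m : Fin N) :
    modeUnfold (modeMul X n (Matrix.of fun s t => if t = f s then (1 : ℝ) else 0)) m
      = (modeUnfold X m).submatrix (selF I n R f m)
          (fun j m' => selF I n R f m'.1 (j m')) := by
  ext p j
  rw [Matrix.submatrix_apply]
  unfold modeUnfold
  simp only [Matrix.of_apply]
  rw [modeMul_sel_apply]
  congr 1
  funext m'
  by_cases h : m' = m
  · subst h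
    rw [dif_pos rfl, dif_pos rfl]
    by_cases h2 : m' = n
    · subst h2
      unfold selF
      rw [dif_pos rfl, dif_pos rfl]
      exact Fin.ext rfl
    · unfold selF
      rw [dif_neg h2, dif_neg h2]
      exact Fin.ext rfl
  · rw [dif_neg h, dif_neg h]

end Aux

section Aux2
open Matrix

variable {N : ℕ} {I : Fin N → ℕ}

/-- Bridge between the mode-`m` and mode-`n` unfoldings entrywise. -/
lemma unfold_bridge (X : Tensor N I) (m n : Fin N) (hmn : m ≠ n) (q : Fin (I m))
    (j : (m' : {m' : Fin N // m' ≠ m}) → Fin (I m'.1)) :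
    modeUnfold X m q j = modeUnfold X n (j ⟨n, Ne.symm hmn⟩)
      (fun m'' => if h : m''.1 = m then Fin.cast (congrArg I h.symm) q
        else j ⟨m''.1, h⟩) := by
  unfold modeUnfold
  simp only [Matrix.of_apply]
  congr 1
  funext m'
  by_cases h1 : m' = m
  · subst h1
    rw [dif_pos rfl, dif_neg hmn, dif_pos rfl]
  · rw [dif_neg h1]
    by_cases h2 : m' = n
    · subst h2
      rw [dif_pos rfl]
      exact Fin.ext rfl
    · rw [dif_neg h2, dif_neg h1]

/-- Every row of the unfolding is a combination of the selected rows. -/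
lemma rows_span (X : Tensor N I) (n : Fin N) {R : ℕ} (f : Fin R → Fin (I n))
    (hR : R = (modeUnfold X n).rank)
    (hind : LinearIndependent ℝ (fun s : Fin R => modeUnfold X n (f s))) :
    ∀ t : Fin (I n), ∃ c : Fin R → ℝ,
      ∀ k, modeUnfold X n t k = ∑ s, c s * modeUnfold X n (f s) k := by
  classical
  set M := modeUnfold X n with hM
  have hW : Submodule.span ℝ (Set.range fun s => M (f s))
      = Submodule.span ℝ (Set.range M) := by
    apply Submodule.eq_of_le_of_finrank_le
    · exact Submodule.span_mono (by rintro _ ⟨s, rfl⟩; exact ⟨f s, rfl⟩)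
    · rw [show Set.range M = Set.range M.row from rfl, ← Matrix.rank_eq_finrank_span_row, ← hR, finrank_span_eq_card hind,
        Fintype.card_fin]
  intro t
  have ht : M t ∈ Submodule.span ℝ (Set.range fun s => M (f s)) := by
    rw [hW]; exact Submodule.subset_span ⟨t, rfl⟩
  rw [Submodule.mem_span_range_iff_exists_fun] at ht
  obtain ⟨c, hc⟩ := ht
  refine ⟨c, fun k => ?_⟩
  have := congrFun hc k
  simp only [Finset.sum_apply, Pi.smul_apply, smul_eq_mul] at this
  exact this.symm

/-- Rank is unchanged by selecting columns that still span the column space. -/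
lemma rank_submatrix_id_eq {α β β' : Type*} [Fintype α] [Fintype β] [Fintype β']
    (M : Matrix α β ℝ) (g : β' → β)
    (h : ∀ j : β, Mᵀ j ∈ Submodule.span ℝ (Set.range (M.submatrix id g)ᵀ)) :
    (M.submatrix id g).rank = M.rank := by
  rw [Matrix.rank_eq_finrank_span_cols, Matrix.rank_eq_finrank_span_cols]
  have hsp : Submodule.span ℝ (Set.range (M.submatrix id g)ᵀ)
      = Submodule.span ℝ (Set.range Mᵀ) := by
    apply le_antisymm
    · exact Submodule.span_mono (by rintro _ ⟨j', rfl⟩; exact ⟨g j', rfl⟩)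
    · rw [Submodule.span_le]
      rintro _ ⟨j, rfl⟩
      exact h j
  exact congrArg (fun S : Submodule ℝ _ => Module.finrank ℝ S) hsp

/-- Rank is unchanged by reindexing rows along an equivalence. -/
lemma rank_submatrix_equiv_id {α α' β : Type*} [Fintype α] [Fintype α'] [Fintype β]
    (M : Matrix α β ℝ) (e : α' ≃ α) :
    (M.submatrix e id).rank = M.rank := by
  rw [Matrix.rank_eq_finrank_span_row, Matrix.rank_eq_finrank_span_row]
  have : Set.range (M.submatrix e id) = Set.range M := by
    ext v
    constructor
    · rintro ⟨p, rfl⟩; exact ⟨e p, rfl⟩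
    · rintro ⟨q, rfl⟩; exact ⟨e.symm q, congrArg M (e.apply_symm_apply q)⟩
  exact congrArg (fun S : Set _ => Module.finrank ℝ (Submodule.span ℝ S)) this

end Aux2

/-- Selecting `R = rank X₍ₙ₎` linearly independent rows of the mode-`n`
unfolding via a 0-1 selection matrix `A` yields a subtensor `Y = X ×ₙ A` of `X`
all of whose unfolding ranks agree with those of `X`. -/
theorem modeMul_selection_preserves_unfolding_ranks
    (N : ℕ) (I : Fin N → ℕ) (X : Tensor N I) (hX : X ≠ 0) (n : Fin N) (R : ℕ)
    (hR : R = (modeUnfold X n).rank) (f : Fin R → Fin (I n))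
    (hf : StrictMono f)
    (hind : LinearIndependent ℝ (fun s : Fin R => modeUnfold X n (f s))) :
    IsSubtensor
        (modeMul X n (Matrix.of fun s t => if t = f s then (1 : ℝ) else 0)) X ∧
      ∀ m : Fin N,
        (modeUnfold
            (modeMul X n (Matrix.of fun s t => if t = f s then (1 : ℝ) else 0))
            m).rank = (modeUnfold X m).rank := by
  classical
  refine ⟨⟨selF I n R f, fun m => selF_strictMono hf m,
      fun i => modeMul_sel_apply X f i⟩, ?_⟩
  intro m
  rw [modeUnfold_modeMul_sel]
  by_cases hmn : m = n
  · subst hmn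
    -- mode n : the selected rows are linearly independent
    set rowsEquiv : Fin (Function.update I m R m) ≃ Fin R :=
      finCongr (Function.update_self m R I) with hre
    set colEquiv : ((m' : {m' : Fin N // m' ≠ m}) → Fin (Function.update I m R m'.1))
        ≃ ((m' : {m' : Fin N // m' ≠ m}) → Fin (I m'.1)) :=
      Equiv.piCongrRight (fun m' => finCongr (Function.update_of_ne m'.2 R I)) with hce
    set Z : Matrix (Fin (Function.update I m R m))
        ((m' : {m' : Fin N // m' ≠ m}) → Fin (Function.update I m R m'.1)) ℝ :=
      (modeUnfold X m).submatrix (selF I m R f m)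
        (fun j m' => selF I m R f m'.1 (j m')) with hZ
    have h1 : ∀ s, selF I m R f m s = f (rowsEquiv s) := by
      intro s
      unfold selF
      rw [dif_pos rfl]
      exact Fin.ext rfl
    have h2 : ∀ j, (fun m' => selF I m R f m'.1 (j m')) = colEquiv j := by
      intro j
      funext m'
      unfold selF
      rw [dif_neg m'.2]
      rfl
    have hZeq : Z = fun s => (LinearMap.funLeft ℝ ℝ colEquiv)
        (modeUnfold X m (f (rowsEquiv s))) := by
      funext s j
      show modeUnfold X m (selF I m R f m s)
          (fun m' => selF I m R f m'.1 (j m'))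
        = modeUnfold X m (f (rowsEquiv s)) (colEquiv j)
      rw [h1, h2]
    have hli : LinearIndependent ℝ Z := by
      rw [hZeq]
      exact (hind.comp rowsEquiv rowsEquiv.injective).map'
        (LinearMap.funLeft ℝ ℝ colEquiv)
        (LinearMap.ker_eq_bot.mpr
          (LinearMap.funLeft_injective_of_surjective ℝ ℝ _ colEquiv.surjective))
    rw [LinearIndependent.rank_matrix (M := Z) hli, Fintype.card_fin, Function.update_self]
    exact hR
  · -- mode m ≠ n
    set eRow : Fin (Function.update I n R m) ≃ Fin (I m) :=
      finCongr (Function.update_of_ne hmn R I) with her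
    have hRowEq : selF I n R f m = ⇑eRow := by
      funext i
      unfold selF
      rw [dif_neg hmn]
      rfl
    rw [hRowEq]
    have hsplit : (modeUnfold X m).submatrix (⇑eRow)
          (fun (j : (m' : {m' : Fin N // m' ≠ m}) → Fin (Function.update I n R m'.1))
            m' => selF I n R f m'.1 (j m'))
        = (((modeUnfold X m).submatrix (⇑eRow) id).submatrix id
            (fun (j : (m' : {m' : Fin N // m' ≠ m}) → Fin (Function.update I n R m'.1))
              m' => selF I n R f m'.1 (j m'))) := rfl
    rw [hsplit, rank_submatrix_id_eq _ _ ?span, rank_submatrix_equiv_id]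
    case span =>
      intro j
      obtain ⟨c, hc⟩ := rows_span X n f hR hind (j ⟨n, Ne.symm hmn⟩)
      -- the selected column indices
      set jsel : Fin R → ((m' : {m' : Fin N // m' ≠ m}) → Fin (Function.update I n R m'.1)) :=
        fun s m' =>
          if h : m'.1 = n then
            Fin.cast (show R = Function.update I n R m'.1 by rw [h, Function.update_self]) s
          else Fin.cast (Function.update_of_ne h R I).symm (j m') with hjsel
      set jrep : Fin R → ((m' : {m' : Fin N // m' ≠ m}) → Fin (I m'.1)) :=
        fun s m' =>
          if h : m'.1 = n then Fin.cast (congrArg I h.symm) (f s) else j m' with hjrep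
      have hγ : ∀ s, (fun m' => selF I n R f m'.1 (jsel s m')) = jrep s := by
        intro s
        funext m'
        obtain ⟨mv, hmv⟩ := m'
        show selF I n R f mv _ = _
        by_cases h : mv = n
        · subst h
          unfold selF
          rw [hjsel, hjrep]
          simp only [dif_pos rfl]
          exact Fin.ext rfl
        · unfold selF
          rw [hjsel, hjrep]
          simp only [dif_neg h]
          exact Fin.ext rfl
      have hkey : Matrix.transpose ((modeUnfold X m).submatrix (⇑eRow) id) j
          = ∑ s, c s • Matrix.transpose (((modeUnfold X m).submatrix (⇑eRow) id).submatrix id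
              (fun (j' : (m' : {m' : Fin N // m' ≠ m}) → Fin (Function.update I n R m'.1))
                m' => selF I n R f m'.1 (j' m'))) (jsel s) := by
        funext p
        simp only [Finset.sum_apply, Pi.smul_apply, smul_eq_mul]
        show modeUnfold X m (eRow p) j
          = ∑ s, c s * modeUnfold X m (eRow p) (fun m' => selF I n R f m'.1 (jsel s m'))
        rw [unfold_bridge X m n hmn (eRow p) j, hc]
        apply Finset.sum_congr rfl
        intro s _
        congr 1
        rw [hγ s, unfold_bridge X m n hmn (eRow p) (jrep s)]
        congr 1
        · show f s = jrep s ⟨n, Ne.symm hmn⟩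
          rw [hjrep]
          simp only [dif_pos rfl]
          exact Fin.ext rfl
        · funext m''
          obtain ⟨mv, hmv⟩ := m''
          by_cases h : mv = m
          · simp only [dif_pos h]
          · simp only [dif_neg h]
            show j ⟨mv, h⟩ = jrep s ⟨mv, h⟩
            rw [hjrep]
            simp only [dif_neg hmv]
      rw [hkey]
      exact Submodule.sum_mem _ fun s _ =>
        Submodule.smul_mem _ _ (Submodule.subset_span ⟨jsel s, rfl⟩)
end

section
/- Let X ∈ ℝ^{I₁×⋯×I_N} be a nonzero tensor and set R_n = rank(X_(n)) for each n. Then X has a subtensor Y ∈ ℝ^{R₁×⋯×R_N} with rank(Y_(n)) = R_n for all 1 ≤ n ≤ N. -/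
open scoped BigOperators

open Submodule Module Matrix
set_option linter.unusedSectionVars false

section MatrixAux

variable {l o m n : Type*} [Fintype l] [Fintype o] [Fintype m] [Fintype n]

lemma aux_rank_rows (A : Matrix m n ℝ) (g : l → m)
    (h : span ℝ (Set.range fun p => A (g p)) = span ℝ (Set.range A)) :
    (A.submatrix g id).rank = A.rank := by
  rw [Matrix.rank_eq_finrank_span_row, Matrix.rank_eq_finrank_span_row]
  rw [show Set.range (A.submatrix g id).row = Set.range fun p => A (g p) from rfl,
    show Set.range A.row = Set.range A from rfl, h]

lemma aux_rank_cols (A : Matrix m n ℝ) (g : l → n)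
    (h : span ℝ (Set.range fun q => Aᵀ (g q)) = span ℝ (Set.range Aᵀ)) :
    (A.submatrix id g).rank = A.rank := by
  rw [← Matrix.rank_transpose (A.submatrix id g), ← Matrix.rank_transpose A]
  exact aux_rank_rows Aᵀ g h

lemma aux_span_precomp {ι κ : Type*} (e : o ≃ n) (v : ι → n → ℝ) (w : κ → n → ℝ)
    (h : span ℝ (Set.range v) = span ℝ (Set.range w)) :
    span ℝ (Set.range fun i => v i ∘ ⇑e) = span ℝ (Set.range fun k => w k ∘ ⇑e) := by
  have hv : Set.range (fun i => v i ∘ ⇑e) = (LinearMap.funLeft ℝ ℝ ⇑e) '' Set.range v := by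
    rw [← Set.range_comp]; rfl
  have hw : Set.range (fun k => w k ∘ ⇑e) = (LinearMap.funLeft ℝ ℝ ⇑e) '' Set.range w := by
    rw [← Set.range_comp]; rfl
  rw [hv, hw, ← Submodule.map_span, ← Submodule.map_span, h]

end MatrixAux

section Sel


variable {N : ℕ} (I : Fin N → ℕ) (n : Fin N) (R : ℕ)

/-- The shape obtained from `I` by replacing mode `n` with `R`. -/
def selShape : Fin N → ℕ := fun m => if m = n then R else I m

lemma selShape_eq {m : Fin N} (h : m = n) : selShape I n R m = R := if_pos h

lemma selShape_ne {m : Fin N} (h : m ≠ n) : selShape I n R m = I m := if_neg h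

variable {R} (e : Fin R → Fin (I n))

/-- Index selection maps: `e` in mode `n`, identity elsewhere. -/
def selMap : (m : Fin N) → Fin (selShape I n R m) → Fin (I m) := fun m =>
  if h : m = n then
    fun q => Fin.cast (congrArg I h).symm (e (Fin.cast (selShape_eq I n R h) q))
  else fun q => Fin.cast (selShape_ne I n R h) q

lemma selMap_eq_n (q : Fin (selShape I n R n)) :
    selMap I n e n q = e (Fin.cast (selShape_eq I n R rfl) q) := by
  unfold selMap
  rw [dif_pos rfl]
  rfl

lemma selMap_eq_ne {m : Fin N} (hm : m ≠ n) (q : Fin (selShape I n R m)) :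
    selMap I n e m q = Fin.cast (selShape_ne I n R hm) q := by
  unfold selMap
  rw [dif_neg hm]

lemma selMap_strictMono (he : StrictMono e) (m : Fin N) : StrictMono (selMap I n e m) := by
  intro a b hab
  by_cases h : m = n
  · subst h
    rw [selMap_eq_n, selMap_eq_n]
    exact he hab
  · rw [selMap_eq_ne I n e h, selMap_eq_ne I n e h]
    exact hab

variable (X : Tensor N I)

/-- The subtensor of `X` given by the selection maps. -/
def selTensor : Tensor N (selShape I n R) := fun i => X fun m => selMap I n e m (i m)

lemma isSubtensor_selTensor (he : StrictMono e) : IsSubtensor (selTensor I n e X) X :=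
  ⟨selMap I n e, selMap_strictMono I n e he, fun _ => rfl⟩

/-- The induced map on column indices of the mode-`m` unfolding. -/
def colSel (m : Fin N) :
    ((m' : {m' : Fin N // m' ≠ m}) → Fin (selShape I n R m'.1)) →
      ((m' : {m' : Fin N // m' ≠ m}) → Fin (I m'.1)) :=
  fun j m' => selMap I n e m'.1 (j m')

lemma modeUnfold_selTensor (m : Fin N) :
    modeUnfold (selTensor I n e X) m =
      (modeUnfold X m).submatrix (selMap I n e m) (colSel I n e m) := by
  ext p j
  show X _ = X _
  congr 1
  funext m'
  beta_reduce
  by_cases h : m' = m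
  · subst h
    rw [dif_pos rfl, dif_pos rfl]
    rfl
  · rw [dif_neg h, dif_neg h]
    rfl


lemma rank_selTensor_self
    (hspan : span ℝ (Set.range fun r => modeUnfold X n (e r)) =
      span ℝ (Set.range (modeUnfold X n))) :
    (modeUnfold (selTensor I n e X) n).rank = (modeUnfold X n).rank := by
  classical
  set A := modeUnfold X n with hA
  rw [modeUnfold_selTensor]
  let εc : ((m' : {m' : Fin N // m' ≠ n}) → Fin (selShape I n R m'.1)) ≃
      ((m' : {m' : Fin N // m' ≠ n}) → Fin (I m'.1)) :=
    Equiv.piCongrRight fun m' => finCongr (selShape_ne I n R m'.2)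
  have hdecomp : A.submatrix (selMap I n e n) (colSel I n e n) =
      (A.submatrix id ⇑εc).submatrix (selMap I n e n) id := by
    ext p j
    simp only [Matrix.submatrix_apply, id_eq]
    congr 1
    funext m'
    show selMap I n e m'.1 (j m') = _
    rw [selMap_eq_ne I n e m'.2]
    rfl
  rw [hdecomp]
  have h1 : Set.range (fun p : Fin (selShape I n R n) => A (selMap I n e n p)) =
      Set.range (fun r : Fin R => A (e r)) := by
    ext v
    simp only [Set.mem_range]
    constructor
    · rintro ⟨p, rfl⟩
      exact ⟨Fin.cast (selShape_eq I n R rfl) p, by rw [selMap_eq_n]⟩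
    · rintro ⟨r, rfl⟩
      refine ⟨Fin.cast (selShape_eq I n R rfl).symm r, ?_⟩
      rw [selMap_eq_n]
      congr 1
  have h2 : span ℝ (Set.range fun p : Fin (selShape I n R n) => A (selMap I n e n p)) =
      span ℝ (Set.range A) := by rw [h1, hspan]
  have h3 : ((A.submatrix id ⇑εc).submatrix (selMap I n e n) id).rank =
      (A.submatrix id ⇑εc).rank := by
    apply aux_rank_rows
    show span ℝ (Set.range fun p : Fin (selShape I n R n) => (A (selMap I n e n p)) ∘ ⇑εc) =
      span ℝ (Set.range fun q => (A q) ∘ ⇑εc)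
    exact aux_span_precomp εc _ _ h2
  rw [h3]
  apply aux_rank_cols
  rw [show (fun q => Aᵀ (⇑εc q)) = Aᵀ ∘ ⇑εc from rfl]
  exact congrArg (span ℝ) (εc.surjective.range_comp Aᵀ.row)

lemma rank_selTensor_other
    (hspan : span ℝ (Set.range fun r => modeUnfold X n (e r)) =
      span ℝ (Set.range (modeUnfold X n)))
    {m : Fin N} (hmn : m ≠ n) :
    (modeUnfold (selTensor I n e X) m).rank = (modeUnfold X m).rank := by
  classical
  rw [modeUnfold_selTensor]
  set A := modeUnfold X n with hA
  set M := modeUnfold X m with hM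
  let εr : Fin (selShape I n R m) ≃ Fin (I m) := finCongr (selShape_ne I n R hmn)
  have hdecomp : M.submatrix (selMap I n e m) (colSel I n e m) =
      (M.submatrix id (colSel I n e m)).submatrix ⇑εr id := by
    ext p j
    simp only [Matrix.submatrix_apply, id_eq]
    congr 1
    rw [selMap_eq_ne I n e hmn]
    rfl
  rw [hdecomp]
  have h1 : ((M.submatrix id (colSel I n e m)).submatrix ⇑εr id).rank =
      (M.submatrix id (colSel I n e m)).rank := by
    apply aux_rank_rows
    exact congrArg (span ℝ) (εr.surjective.range_comp _)
  rw [h1]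
  apply aux_rank_cols
  apply le_antisymm
  · apply span_mono
    rintro v ⟨j, rfl⟩
    exact ⟨_, rfl⟩
  · rw [span_le]
    rintro v ⟨j, rfl⟩
    have hnm : n ≠ m := fun h => hmn h.symm
    have hmem : A (j ⟨n, hnm⟩) ∈ span ℝ (Set.range fun r => A (e r)) := by
      rw [hspan]; exact subset_span ⟨j ⟨n, hnm⟩, rfl⟩
    obtain ⟨c, hc⟩ := (mem_span_range_iff_exists_fun ℝ).mp hmem
    have hcol : Mᵀ j = ∑ r, c r • Mᵀ (Function.update j ⟨n, hnm⟩ (e r)) := by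
      funext p
      have hk := congrFun hc (fun m'' : {m'' : Fin N // m'' ≠ n} =>
        if h : m''.1 = m then Fin.cast (congrArg I h).symm p else j ⟨m''.1, h⟩)
      simp only [Finset.sum_apply, Pi.smul_apply, smul_eq_mul] at hk
      have hL : A (j ⟨n, hnm⟩) (fun m'' : {m'' : Fin N // m'' ≠ n} =>
          if h : m''.1 = m then Fin.cast (congrArg I h).symm p else j ⟨m''.1, h⟩) = M p j := by
        show X _ = X _
        congr 1
        funext m''
        beta_reduce
        split
        · next h =>
          subst h
          split
          · next h' => exact absurd h' hnm
          · next h' => rfl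
        · next h =>
          split
          · next h' => rfl
          · next h' => rfl
      have hR : ∀ r : Fin R, A (e r) (fun m'' : {m'' : Fin N // m'' ≠ n} =>
          if h : m''.1 = m then Fin.cast (congrArg I h).symm p else j ⟨m''.1, h⟩) =
          M p (Function.update j ⟨n, hnm⟩ (e r)) := by
        intro r
        show X _ = X _
        congr 1
        funext m''
        beta_reduce
        split
        · next h =>
          subst h
          split
          · next h' => exact absurd h' hnm
          · next h' =>
            show Fin.cast _ (e r) = Function.update j ⟨m'', hnm⟩ (e r) ⟨m'', hnm⟩
            rw [Function.update_self]
            rfl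
        · next h =>
          split
          · next h' => rfl
          · next h' =>
            exact (Function.update_of_ne (fun hq => h (congrArg Subtype.val hq)) _ _).symm
      show M p j = _
      rw [← hL, ← hk]
      simp only [Finset.sum_apply, Pi.smul_apply, smul_eq_mul]
      refine Finset.sum_congr rfl fun r _ => ?_
      rw [hR r]
      rfl
    rw [hcol]
    refine Submodule.sum_mem _ fun r _ => Submodule.smul_mem _ _ (subset_span ?_)
    have hupd : Function.update j ⟨n, hnm⟩ (e r) ∈ Set.range (colSel I n e m) := by
      refine ⟨fun (m' : {m' : Fin N // m' ≠ m}) =>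
        if h : m' = (⟨n, hnm⟩ : {m' : Fin N // m' ≠ m}) then
          Fin.cast (show R = selShape I n R m'.1 by
            rw [h]; exact (selShape_eq I n R rfl).symm) r
        else Fin.cast (show I m'.1 = selShape I n R m'.1 from
          (selShape_ne I n R (fun hh => h (Subtype.ext hh))).symm) (j m'), ?_⟩
      funext m'
      show selMap I n e m'.1 _ = _
      beta_reduce
      by_cases h : m' = (⟨n, hnm⟩ : {m' : Fin N // m' ≠ m})
      · subst h
        rw [dif_pos rfl, Function.update_self]
        show selMap I n e n (Fin.cast _ r) = e r
        rw [selMap_eq_n]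
        congr 1
      · rw [dif_neg h, Function.update_of_ne h]
        show selMap I n e m'.1 (Fin.cast _ (j m')) = j m'
        rw [selMap_eq_ne I n e (fun hh => h (Subtype.ext hh))]
        apply Fin.ext
        simp
    obtain ⟨jp, hjp⟩ := hupd
    exact ⟨jp, by show Mᵀ (colSel I n e m jp) = _; rw [hjp]⟩



lemma exists_row_basis {K : ℕ} {ι : Type*} [Fintype ι] [DecidableEq ι] (A : Matrix (Fin K) ι ℝ) :
    ∃ e : Fin A.rank → Fin K, StrictMono e ∧
      span ℝ (Set.range fun r => A (e r)) = span ℝ (Set.range A) := by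
  classical
  obtain ⟨t, hts, htsp, htli⟩ := exists_linearIndependent ℝ (Set.range A)
  haveI : Fintype t := htli.setFinite.fintype
  have hcard : Fintype.card t = A.rank := by
    have h1 := linearIndependent_iff_card_eq_finrank_span.mp htli
    rw [Set.finrank, Subtype.range_coe, htsp] at h1
    rw [Matrix.rank_eq_finrank_span_row]; exact h1
  choose idx hidx using fun x : t => hts x.2
  have hinj : Function.Injective idx := fun x y hxy =>
    Subtype.ext (by rw [← hidx x, ← hidx y, hxy])
  set T : Finset (Fin K) := Finset.univ.image idx with hT
  have hTcard : T.card = A.rank := by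
    rw [hT, Finset.card_image_of_injective _ hinj, Finset.card_univ, hcard]
  refine ⟨⇑(T.orderEmbOfFin hTcard), (T.orderEmbOfFin hTcard).strictMono, ?_⟩
  have hrange : Set.range (fun r => A (T.orderEmbOfFin hTcard r)) = A '' ↑T := by
    rw [show (fun r => A (T.orderEmbOfFin hTcard r)) = A.row ∘ ⇑(T.orderEmbOfFin hTcard) from rfl,
      Set.range_comp, Finset.range_orderEmbOfFin]
    rfl
  rw [hrange]
  apply le_antisymm
  · exact span_mono (Set.image_subset_range _ _)
  · rw [← htsp]
    refine span_mono fun x hx => ⟨idx ⟨x, hx⟩, ?_, hidx ⟨x, hx⟩⟩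
    rw [hT]
    exact Finset.mem_coe.mpr (Finset.mem_image.mpr ⟨⟨x, hx⟩, Finset.mem_univ _, rfl⟩)

lemma selStep {N : ℕ} {I : Fin N → ℕ} (X : Tensor N I) (n : Fin N) :
    ∃ (J : Fin N → ℕ) (Y : Tensor N J), IsSubtensor Y X ∧
      (∀ m, (modeUnfold Y m).rank = (modeUnfold X m).rank) ∧
      J n = (modeUnfold X n).rank ∧ ∀ m, m ≠ n → J m = I m := by
  obtain ⟨e, he, hspan⟩ := exists_row_basis (modeUnfold X n)
  refine ⟨selShape I n (modeUnfold X n).rank, selTensor I n e X,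
    isSubtensor_selTensor I n e X he, ?_, selShape_eq I n _ rfl, fun m hm => selShape_ne I n _ hm⟩
  intro m
  by_cases hm : m = n
  · subst hm
    exact rank_selTensor_self I m e X hspan
  · exact rank_selTensor_other I n e X hspan hm

lemma isSubtensor_refl {N : ℕ} {I : Fin N → ℕ} (X : Tensor N I) : IsSubtensor X X :=
  ⟨fun _ => id, fun _ => strictMono_id, fun _ => rfl⟩

lemma isSubtensor_trans {N : ℕ} {K J I : Fin N → ℕ} {Z : Tensor N K} {Y : Tensor N J}
    {X : Tensor N I} (h1 : IsSubtensor Z Y) (h2 : IsSubtensor Y X) : IsSubtensor Z X := by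
  obtain ⟨g, hg, hZ⟩ := h1
  obtain ⟨f, hf, hY⟩ := h2
  exact ⟨fun m => f m ∘ g m, fun m => (hf m).comp (hg m), fun i => by rw [hZ, hY]; rfl⟩

lemma selIter {N : ℕ} {I : Fin N → ℕ} (X : Tensor N I) :
    ∀ k : ℕ, k ≤ N → ∃ (J : Fin N → ℕ) (Y : Tensor N J), IsSubtensor Y X ∧
      (∀ m, (modeUnfold Y m).rank = (modeUnfold X m).rank) ∧
      ∀ m : Fin N, m.val < k → J m = (modeUnfold X m).rank := by
  intro k
  induction k with
  | zero => exact fun _ => ⟨I, X, isSubtensor_refl X, fun _ => rfl,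
      fun m hm => absurd hm (Nat.not_lt_zero _)⟩
  | succ k ih =>
    intro hk
    obtain ⟨J, Y, hsub, hrk, hlt⟩ := ih (by omega)
    have hkN : k < N := by omega
    obtain ⟨J', Y', hsub', hrk', hJn, hJne⟩ := selStep Y ⟨k, hkN⟩
    refine ⟨J', Y', isSubtensor_trans hsub' hsub, fun m => (hrk' m).trans (hrk m), ?_⟩
    intro m hm
    by_cases hmk : m = ⟨k, hkN⟩
    · subst hmk
      rw [hJn, hrk]
    · have hv : m.val < k := by
        have : m.val ≠ k := fun hh => hmk (Fin.ext hh)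
        omega
      rw [hJne m hmk, hlt m hv]


/-- Any nonzero tensor `X` has a subtensor of shape `R₁ × ⋯ × R_N`, where
`Rₙ = rank X₍ₙ₎`, with the same unfolding ranks as `X`. -/
theorem exists_subtensor_multilinear_rank
    (N : ℕ) (I : Fin N → ℕ) (X : Tensor N I) (hX : X ≠ 0) :
    ∃ Y : Tensor N (fun n => (modeUnfold X n).rank),
      IsSubtensor Y X ∧ ∀ n : Fin N, (modeUnfold Y n).rank = (modeUnfold X n).rank := by
  obtain ⟨J, Y, hsub, hrk, hall⟩ := selIter X N le_rfl
  have hJ : J = fun n => (modeUnfold X n).rank := funext fun m => hall m m.isLt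
  subst hJ
  exact ⟨Y, hsub, hrk⟩
end Sel
end

section
/- Define r on real tensors by: r(X)=0 if X=0; r(X)=1 if X has rank one; if X ∈ ℝ^{I₁×⋯×I_N} is nonzero, not rank one, and exactly two modes n₁ < n₂ have I_{n₁}, I_{n₂} > 1, then r(X) = rank of the associated I_{n₁}×I_{n₂} matrix; if at least three modes have dimension > 1, then r(X) = max{I₁,…,I_N}. Then r is a QZC rank function. -/
open scoped BigOperators

open Matrix in
lemma matRank_ne_zero {m n : Type*} [Fintype m] [Fintype n]
    (A : Matrix m n ℝ) (h : A ≠ 0) : A.rank ≠ 0 := by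
  classical
  intro h0
  apply h
  have : LinearMap.range A.mulVecLin = ⊥ := by
    rw [Matrix.rank] at h0
    exact Submodule.finrank_eq_zero.mp h0
  have hz : A.mulVecLin = 0 := LinearMap.range_eq_bot.mp this
  ext i j
  have := congrFun (congrArg (fun f => f (Pi.single j 1)) hz) i
  simpa [Matrix.mulVecLin, Matrix.mulVec_single] using this

open Matrix in
lemma matRank_smul {m n : Type*} [Fintype m] [Fintype n] [DecidableEq m]
    (A : Matrix m n ℝ) {α : ℝ} (hα : α ≠ 0) : (α • A).rank = A.rank := by
  rw [Matrix.smul_eq_diagonal_mul]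
  apply Matrix.rank_mul_eq_right_of_isUnit_det
  simp [isUnit_iff_ne_zero, hα]

open Matrix in
lemma matRank_outer {m n : Type*} [Fintype m] [Fintype n]
    (u : m → ℝ) (v : n → ℝ) (hu : u ≠ 0) (hv : v ≠ 0) :
    (Matrix.of fun i j => u i * v j).rank = 1 := by
  have heq : (Matrix.of fun i j => u i * v j) = Matrix.vecMulVec u v := rfl
  obtain ⟨i, hi⟩ := Function.ne_iff.mp hu
  obtain ⟨j, hj⟩ := Function.ne_iff.mp hv
  have hne : (Matrix.of fun i j => u i * v j) ≠ 0 := by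
    intro h
    have := congrFun (congrFun h i) j
    simp at this
    exact this.elim (by simpa using hi) (by simpa using hj)
  have hle : (Matrix.of fun i j => u i * v j).rank ≤ 1 := by
    rw [heq, Matrix.vecMulVec_eq Unit]
    calc (Matrix.replicateCol Unit u * Matrix.replicateRow Unit v).rank ≤ (Matrix.replicateCol Unit u).rank :=
          Matrix.rank_mul_le_left _ _
      _ ≤ Fintype.card Unit := Matrix.rank_le_card_width _
      _ = 1 := by simp
  have := matRank_ne_zero _ hne
  omega

open Matrix in
lemma matRank_one_decomp {m n : Type*} [Fintype m] [Fintype n]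
    (A : Matrix m n ℝ) (h : A.rank = 1) :
    ∃ (u : m → ℝ) (v : n → ℝ), u ≠ 0 ∧ v ≠ 0 ∧ ∀ i j, A i j = u i * v j := by
  have hA : A ≠ 0 := by rintro rfl; simp [Matrix.rank_zero] at h
  rw [Matrix.rank_eq_finrank_span_cols] at h
  obtain ⟨j₀, hj₀⟩ : ∃ j, Aᵀ j ≠ 0 := by
    by_contra hc
    push_neg at hc
    apply hA
    ext i j
    have := congrFun (hc j) i
    simpa using this
  set S := Submodule.span ℝ (Set.range Aᵀ) with hS
  have hmem : Aᵀ j₀ ∈ S := Submodule.subset_span ⟨j₀, rfl⟩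
  have hsub : Submodule.span ℝ {Aᵀ j₀} ≤ S := by
    rw [Submodule.span_le]; simpa using hmem
  have hfr : Module.finrank ℝ (Submodule.span ℝ {Aᵀ j₀}) = 1 :=
    finrank_span_singleton hj₀
  have hSeq : Submodule.span ℝ {Aᵀ j₀} = S :=
    Submodule.eq_of_le_of_finrank_eq hsub (by rw [hfr]; exact h.symm)
  have hcols : ∀ j, ∃ c : ℝ, Aᵀ j = c • Aᵀ j₀ := by
    intro j
    have : Aᵀ j ∈ Submodule.span ℝ {Aᵀ j₀} := by
      rw [hSeq]; exact Submodule.subset_span ⟨j, rfl⟩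
    obtain ⟨c, hc⟩ := Submodule.mem_span_singleton.mp this
    exact ⟨c, hc.symm⟩
  choose c hc using hcols
  refine ⟨Aᵀ j₀, c, hj₀, ?_, ?_⟩
  · intro h0
    apply hA
    ext i j
    have := congrFun (hc j) i
    simp only [congrFun h0 j, zero_smul, Pi.zero_apply] at this
    simpa using this
  · intro i j
    have := congrFun (hc j) i
    simp only [Pi.smul_apply, smul_eq_mul] at this
    rw [Matrix.transpose_apply] at this
    rw [this, mul_comm]

open Matrix in
lemma matRank_submatrix_le {m n l o : Type*} [Fintype m] [Fintype n] [Fintype l] [Fintype o]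
    (A : Matrix m n ℝ) (f : l → m) (g : o → n) : (A.submatrix f g).rank ≤ A.rank := by
  classical
  have hP : A.submatrix f g =
      (Matrix.of fun (i : l) (k : m) => if f i = k then (1:ℝ) else 0) * A *
      (Matrix.of fun (k : n) (j : o) => if k = g j then (1:ℝ) else 0) := by
    ext i j
    simp [Matrix.mul_apply, Finset.sum_ite_eq, Finset.sum_ite_eq', ite_and, Finset.mul_sum]
  calc (A.submatrix f g).rank
      ≤ ((Matrix.of fun (i : l) (k : m) => if f i = k then (1:ℝ) else 0) * A).rank := by
        rw [hP]; exact Matrix.rank_mul_le_left _ _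
    _ ≤ A.rank := Matrix.rank_mul_le_right _ _

open Matrix in
lemma matRank_submatrix_equiv {m n l o : Type*} [Fintype m] [Fintype n] [Fintype l] [Fintype o]
    (A : Matrix m n ℝ) (f : l ≃ m) (g : o ≃ n) : (A.submatrix f g).rank = A.rank := by
  refine le_antisymm (matRank_submatrix_le A f g) ?_
  have : A = (A.submatrix f g).submatrix f.symm g.symm := by
    ext i j; simp
  calc A.rank = ((A.submatrix f g).submatrix f.symm g.symm).rank := by rw [← this]
    _ ≤ (A.submatrix f g).rank := matRank_submatrix_le _ _ _

namespace QZCaux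

variable {N : ℕ} {I : Fin N → ℕ}

lemma tensor_eq_zero (X : Tensor N I) (m : Fin N) (h : I m = 0) : X = 0 := by
  funext i
  exact absurd h (by have := (i m).isLt; omega)

lemma dim_pos {X : Tensor N I} (hX : X ≠ 0) (m : Fin N) : 0 < I m := by
  by_contra h
  exact hX (tensor_eq_zero X m (by omega))

lemma apply_eq (X : Tensor N I) {i j : (n : Fin N) → Fin (I n)}
    (h : ∀ n, (i n).val = (j n).val) : X i = X j := by
  congr 1
  funext n
  exact Fin.ext (h n)

lemma apply_cast (i : (n : Fin N) → Fin (I n)) {m n : Fin N} (e : m = n) :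
    (i m).val = (i n).val := by subst e; rfl

lemma exists_ne_zero {X : Tensor N I} (hX : X ≠ 0) : ∃ i, X i ≠ 0 := by
  by_contra h
  push_neg at h
  exact hX (funext h)

lemma IsRankOne.ne_zero {X : Tensor N I} (h : IsRankOne X) : X ≠ 0 := by
  obtain ⟨a, ha, hX⟩ := h
  have hk : ∀ n, ∃ k, a n k ≠ 0 := fun n => Function.ne_iff.mp (ha n)
  choose k hknz using hk
  intro h0
  have := hX k
  rw [h0] at this
  exact (Finset.prod_ne_zero_iff.mpr fun n _ => hknz n) this.symm

lemma rankOne_of_single (X : Tensor N I) (hX : X ≠ 0) (n₀ : Fin N)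
    (h : ∀ m, m ≠ n₀ → I m = 1) : IsRankOne X := by
  classical
  have hpos : ∀ m, 0 < I m := dim_pos hX
  set base : (m : Fin N) → Fin (I m) := fun m => ⟨0, hpos m⟩ with hbase
  set g : Fin (I n₀) → ℝ := fun k => X (Function.update base n₀ k) with hg
  have hXg : ∀ i, X i = g (i n₀) := by
    intro i
    apply apply_eq
    intro n
    by_cases hn : n = n₀
    · subst hn; simp [g, Function.update_self]
    · have h1 : I n = 1 := h n hn
      have := (i n).isLt
      have h2 := ((Function.update base n₀ (i n₀)) n).isLt
      omega
  refine ⟨fun n k => if h : n = n₀ then g (Fin.cast (congrArg I h) k) else 1, ?_, ?_⟩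
  · intro n
    by_cases hn : n = n₀
    · subst hn
      obtain ⟨i₀, hi₀⟩ := exists_ne_zero hX
      rw [hXg i₀] at hi₀
      intro h0
      apply hi₀
      have := congrFun h0 (i₀ n)
      simpa using this
    · intro h0
      have hne : Nonempty (Fin (I n)) := ⟨⟨0, hpos n⟩⟩
      obtain ⟨k⟩ := hne
      have := congrFun h0 k
      simp [hn] at this
  · intro i
    rw [Fintype.prod_eq_single n₀ (fun n hn => by simp [hn])]
    simp [hXg i]

lemma two_le_card {X : Tensor N I} (hN : 0 < N) (hX : X ≠ 0) (hr : ¬ IsRankOne X) :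
    2 ≤ (Finset.univ.filter fun m : Fin N => 1 < I m).card := by
  classical
  by_contra hc
  push_neg at hc
  apply hr
  interval_cases h : (Finset.univ.filter fun m : Fin N => 1 < I m).card
  · apply rankOne_of_single X hX ⟨0, hN⟩
    intro m _
    have : m ∉ (Finset.univ.filter fun m : Fin N => 1 < I m) := by
      rw [Finset.card_eq_zero.mp h]
      exact Finset.notMem_empty m
    simp at this
    have := dim_pos hX m
    omega
  · obtain ⟨n₀, hn₀⟩ := Finset.card_eq_one.mp h
    apply rankOne_of_single X hX n₀
    intro m hm
    have : m ∉ (Finset.univ.filter fun m : Fin N => 1 < I m) := by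
      rw [hn₀]
      simpa using hm
    simp at this
    have := dim_pos hX m
    omega

lemma card_two_cases {X : Tensor N I} (hN : 0 < N) (hX : X ≠ 0) (hr : ¬ IsRankOne X) :
    (∃ n₁ n₂ : Fin N, n₁ ≠ n₂ ∧ 1 < I n₁ ∧ 1 < I n₂ ∧
      (∀ m, m ≠ n₁ → m ≠ n₂ → I m = 1)) ∨
    3 ≤ (Finset.univ.filter fun m : Fin N => 1 < I m).card := by
  classical
  have h2 := two_le_card hN hX hr
  by_cases h3 : 3 ≤ (Finset.univ.filter fun m : Fin N => 1 < I m).card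
  · exact Or.inr h3
  · left
    have hc2 : (Finset.univ.filter fun m : Fin N => 1 < I m).card = 2 := by omega
    obtain ⟨n₁, n₂, hne, hset⟩ := Finset.card_eq_two.mp hc2
    have hmem : ∀ m, 1 < I m ↔ (m = n₁ ∨ m = n₂) := by
      intro m
      constructor
      · intro hm
        have : m ∈ (Finset.univ.filter fun m : Fin N => 1 < I m) := by simpa using hm
        rw [hset] at this
        simpa using this
      · intro hm
        have : m ∈ ({n₁, n₂} : Finset (Fin N)) := by simpa using hm
        rw [← hset] at this
        simpa using this
    refine ⟨n₁, n₂, hne, (hmem n₁).mpr (Or.inl rfl), (hmem n₂).mpr (Or.inr rfl), ?_⟩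
    intro m hm1 hm2
    have hnot : ¬ 1 < I m := fun h => by
      rcases (hmem m).mp h with h' | h' <;> [exact hm1 h'; exact hm2 h']
    have := dim_pos hX m
    omega

lemma twoModeMatrix_apply_val {J : Fin N → ℕ} (Z : Tensor N J) (n₁ n₂ : Fin N)
    (hne : n₁ ≠ n₂) (h1 : ∀ m, m ≠ n₁ → m ≠ n₂ → J m = 1)
    (p : Fin (J n₁)) (q : Fin (J n₂)) (i : (n : Fin N) → Fin (J n))
    (hp : (i n₁).val = p.val) (hq : (i n₂).val = q.val) :
    twoModeMatrix Z n₁ n₂ h1 p q = Z i := by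
  unfold twoModeMatrix
  simp only [Matrix.of_apply]
  apply apply_eq
  intro m
  by_cases h : m = n₁
  · subst h
    simp [hp]
  · rw [dif_neg h]
    by_cases h' : m = n₂
    · subst h'
      simp [hq]
    · rw [dif_neg h']
      have hJ := h1 m h h'
      have := (i m).isLt
      simp only [Fin.coe_cast]
      omega

lemma prod_split_two {n₁ n₂ : Fin N} (hne : n₁ ≠ n₂) (f : Fin N → ℝ) :
    ∏ n, f n = f n₁ * f n₂ * ∏ m ∈ (Finset.univ.erase n₁).erase n₂, f m := by
  classical
  rw [mul_assoc, Finset.mul_prod_erase (Finset.univ.erase n₁) f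
    (Finset.mem_erase.mpr ⟨Ne.symm hne, Finset.mem_univ n₂⟩),
    Finset.mul_prod_erase Finset.univ f (Finset.mem_univ n₁)]

lemma prod_two_modes {n₁ n₂ : Fin N} (hne : n₁ ≠ n₂) (f : Fin N → ℝ)
    (h : ∀ m, m ≠ n₁ → m ≠ n₂ → f m = 1) :
    ∏ n, f n = f n₁ * f n₂ := by
  rw [prod_split_two hne f, Finset.prod_eq_one, mul_one]
  intro m hm
  rw [Finset.mem_erase, Finset.mem_erase] at hm
  exact h m hm.2.1 hm.1

lemma isRankOne_smul {α : ℝ} (hα : α ≠ 0) (hN : 0 < N) {X : Tensor N I}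
    (h : IsRankOne X) : IsRankOne (α • X) := by
  classical
  obtain ⟨a, ha, hX⟩ := h
  set n₀ : Fin N := ⟨0, hN⟩
  refine ⟨fun n k => (if n = n₀ then α else 1) * a n k, ?_, ?_⟩
  · intro n h0
    obtain ⟨k, hk⟩ := Function.ne_iff.mp (ha n)
    have := congrFun h0 k
    simp only [Pi.zero_apply, mul_eq_zero] at this
    rcases this with h' | h'
    · split at h' <;> simp_all
    · exact hk h'
  · intro i
    have : (∏ n, (if n = n₀ then α else 1) * a n (i n)) =
        (∏ n, (if n = n₀ then α else 1)) * ∏ n, a n (i n) := Finset.prod_mul_distrib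
    rw [this, Finset.prod_ite_eq' Finset.univ n₀ (fun _ => α)]
    simp [hX i, mul_comm]

lemma smul_eq_zero_iff' {α : ℝ} (hα : α ≠ 0) (X : Tensor N I) :
    α • X = 0 ↔ X = 0 := by
  constructor
  · intro h
    have := congrArg (fun Y => α⁻¹ • Y) h
    simpa [smul_smul, inv_mul_cancel₀ hα] using this
  · rintro rfl; simp

lemma isRankOne_smul_iff {α : ℝ} (hα : α ≠ 0) (hN : 0 < N) {X : Tensor N I} :
    IsRankOne (α • X) ↔ IsRankOne X := by
  constructor
  · intro h
    have := isRankOne_smul (inv_ne_zero hα) hN h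
    rwa [smul_smul, inv_mul_cancel₀ hα, one_smul] at this
  · exact isRankOne_smul hα hN

lemma permute_zero_iff (π : Equiv.Perm (Fin N)) (X : Tensor N I) :
    permute I π X = 0 ↔ X = 0 := by
  constructor
  · intro h
    funext i
    have h2 := congrFun h (fun m => i (π m))
    have h1 : permute I π X (fun m => i (π m)) = X i := by
      show X _ = X i
      apply apply_eq
      intro m
      simp only [Fin.coe_cast]
      exact apply_cast i (π.apply_symm_apply m)
    rw [h1] at h2
    exact h2
  · rintro rfl
    funext i
    rfl

lemma isRankOne_permute_iff (π : Equiv.Perm (Fin N)) (X : Tensor N I) :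
    IsRankOne (permute I π X) ↔ IsRankOne X := by
  constructor
  · rintro ⟨b, hb, hP⟩
    refine ⟨fun n k => b (π.symm n) (Fin.cast (congrArg I (π.apply_symm_apply n).symm) k),
      ?_, ?_⟩
    · intro n h0
      obtain ⟨k', hk'⟩ := Function.ne_iff.mp (hb (π.symm n))
      apply hk'
      have := congrFun h0 (Fin.cast (congrArg I (π.apply_symm_apply n)) k')
      simpa [Fin.ext_iff] using this
    · intro i
      have h1 : X i = permute I π X (fun m => i (π m)) := by
        symm
        show X _ = X i
        apply apply_eq
        intro m
        simp only [Fin.coe_cast]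
        exact apply_cast i (π.apply_symm_apply m)
      rw [h1, hP]
      rw [← Equiv.prod_comp π.symm
        (fun n => b n ((fun m => i (π m)) n))]
      apply Finset.prod_congr rfl
      intro n _
      apply congrArg
      apply Fin.ext
      simp only [Fin.coe_cast]
      exact apply_cast i (π.apply_symm_apply n)
  · rintro ⟨a, ha, hX⟩
    refine ⟨fun m k => a (π m) k, fun m => ha (π m), ?_⟩
    intro i
    show X _ = _
    rw [hX]
    rw [← Equiv.prod_comp π (fun n => a n (Fin.cast (congrArg I (π.apply_symm_apply n))
      (i (π.symm n))))]
    apply Finset.prod_congr rfl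
    intro m _
    apply congrArg
    apply Fin.ext
    simp only [Fin.coe_cast]
    exact apply_cast i (π.symm_apply_apply m)

lemma card_filter_permute (π : Equiv.Perm (Fin N)) :
    (Finset.univ.filter fun m : Fin N => 1 < I (π m)).card =
    (Finset.univ.filter fun m : Fin N => 1 < I m).card := by
  classical
  apply Finset.card_bij (fun a _ => π a)
  · intro a ha
    simp only [Finset.mem_filter, Finset.mem_univ, true_and] at ha ⊢
    exact ha
  · intro a ha b hb hab
    exact π.injective hab
  · intro b hb
    simp only [Finset.mem_filter, Finset.mem_univ, true_and] at hb ⊢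
    exact ⟨π.symm b, by simpa using hb, by simp⟩

lemma sup_permute (π : Equiv.Perm (Fin N)) :
    (Finset.univ.sup fun m : Fin N => I (π m)) = Finset.univ.sup I := by
  classical
  have : (Finset.univ : Finset (Fin N)).sup (fun m => I (π m)) =
      (Finset.univ.image π).sup I := (Finset.sup_image _ _ _).symm
  have himg : Finset.image (⇑π) Finset.univ = (Finset.univ : Finset (Fin N)) := by
    ext x
    simp only [Finset.mem_image, Finset.mem_univ, true_and, iff_true]
    exact ⟨π.symm x, by simp⟩
  rw [this, himg]

lemma assocMatrix_apply_val (h2 : 2 ≤ N) (h1 : ∀ n : Fin N, 2 ≤ n.val → I n = 1)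
    (X : Tensor N I) (p : Fin (I ⟨0, by omega⟩)) (q : Fin (I ⟨1, by omega⟩))
    (i : (n : Fin N) → Fin (I n))
    (hp : (i ⟨0, by omega⟩).val = p.val) (hq : (i ⟨1, by omega⟩).val = q.val) :
    assocMatrix h2 h1 X p q = X i := by
  unfold assocMatrix
  simp only [Matrix.of_apply]
  apply apply_eq
  intro m
  by_cases h : m = (⟨0, by omega⟩ : Fin N)
  · subst h
    simp [hp]
  · rw [dif_neg h]
    by_cases h' : m = (⟨1, by omega⟩ : Fin N)
    · subst h'
      simp [hq]
    · rw [dif_neg h']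
      have hv : 2 ≤ m.val := by
        have h0 : m.val ≠ 0 := fun hh => h (Fin.ext hh)
        have h1' : m.val ≠ 1 := fun hh => h' (Fin.ext hh)
        omega
      have hlt := (i m).isLt
      have := h1 m hv
      simp only [Fin.coe_cast]
      omega

lemma isRankOne_subtensor {J : Fin N → ℕ} {Y : Tensor N J} {X : Tensor N I}
    (hsub : IsSubtensor Y X) (hY : Y ≠ 0) (hX : IsRankOne X) : IsRankOne Y := by
  obtain ⟨f, hf, hYX⟩ := hsub
  obtain ⟨a, ha, hXa⟩ := hX
  refine ⟨fun n k => a n (f n k), ?_, ?_⟩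
  · intro n h0
    apply hY
    funext i
    rw [hYX i, hXa]
    exact Finset.prod_eq_zero (Finset.mem_univ n) (congrFun h0 (i n))
  · intro i
    rw [hYX i, hXa]

lemma isRankOne_two {n₁ n₂ : Fin N} (hne : n₁ ≠ n₂) (hpos : ∀ m, 0 < I m)
    (u : Fin (I n₁) → ℝ) (v : Fin (I n₂) → ℝ) (hu : u ≠ 0) (hv : v ≠ 0)
    (X : Tensor N I) (hX : ∀ i, X i = u (i n₁) * v (i n₂)) : IsRankOne X := by
  classical
  refine ⟨fun n k => if h : n = n₁ then u (Fin.cast (congrArg I h) k)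
    else if h' : n = n₂ then v (Fin.cast (congrArg I h') k) else 1, ?_, ?_⟩
  · intro n h0
    by_cases h : n = n₁
    · subst h
      obtain ⟨p, hp⟩ := Function.ne_iff.mp hu
      apply hp
      have := congrFun h0 p
      simpa [Fin.ext_iff] using this
    · by_cases h' : n = n₂
      · subst h'
        obtain ⟨q, hq⟩ := Function.ne_iff.mp hv
        apply hq
        have := congrFun h0 q
        simpa [Fin.ext_iff, h] using this
      · have := congrFun h0 ⟨0, hpos n⟩
        simp [h, h'] at this
  · intro i
    rw [hX i, prod_two_modes hne _ (fun m hm1 hm2 => by simp [hm1, hm2])]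
    simp [hne, Ne.symm hne, Fin.ext_iff]

lemma two_le_sup (h : 1 ≤ (Finset.univ.filter fun m : Fin N => 1 < I m).card) :
    2 ≤ Finset.univ.sup I := by
  have hpos : 0 < (Finset.univ.filter fun m : Fin N => 1 < I m).card := by omega
  obtain ⟨m, hm⟩ := Finset.card_pos.mp hpos
  have hm' := (Finset.mem_filter.mp hm).2
  exact le_trans hm' (Finset.le_sup (f := I) (Finset.mem_univ m))

end QZCaux

/-- Any function `r` with: `r 0 = 0`; `r X = 1` for rank-one `X`; `r X` = the
rank of the associated matrix when exactly two modes of `X` have dimension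
`> 1`; and `r X = max {I₁, …, I_N}` when at least three modes have dimension
`> 1`, is a QZC rank function. -/
theorem isQZCRankFn_add0 (r : RankFun)
    (hzero : ∀ (N : ℕ) (I : Fin N → ℕ) (X : Tensor N I), X = 0 → r N I X = 0)
    (hone : ∀ (N : ℕ) (I : Fin N → ℕ) (X : Tensor N I), IsRankOne X → r N I X = 1)
    (htwo : ∀ (N : ℕ) (I : Fin N → ℕ) (X : Tensor N I) (n₁ n₂ : Fin N),
      n₁ ≠ n₂ → 1 < I n₁ → 1 < I n₂ →
      ∀ h1 : (∀ m, m ≠ n₁ → m ≠ n₂ → I m = 1),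
        X ≠ 0 → ¬ IsRankOne X → r N I X = (twoModeMatrix X n₁ n₂ h1).rank)
    (hthree : ∀ (N : ℕ) (I : Fin N → ℕ) (X : Tensor N I),
      X ≠ 0 → ¬ IsRankOne X →
      3 ≤ (Finset.univ.filter fun m : Fin N => 1 < I m).card →
      r N I X = Finset.univ.sup I) :
    IsQZCRankFn r := by
  classical
  have hpos : ∀ (N : ℕ), 0 < N → ∀ (I : Fin N → ℕ) (X : Tensor N I), X ≠ 0 → r N I X ≠ 0 := by
    intro N hN I X hX
    by_cases hr : IsRankOne X
    · rw [hone N I X hr]; omega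
    rcases QZCaux.card_two_cases hN hX hr with ⟨n₁, n₂, hne, hI1, hI2, h1⟩ | h3
    · rw [htwo N I X n₁ n₂ hne hI1 hI2 h1 hX hr]
      apply matRank_ne_zero
      obtain ⟨i, hi⟩ := QZCaux.exists_ne_zero hX
      intro h0
      apply hi
      rw [← QZCaux.twoModeMatrix_apply_val X n₁ n₂ hne h1 (i n₁) (i n₂) i rfl rfl, h0]
      rfl
    · rw [hthree N I X hX hr h3]
      have := QZCaux.two_le_sup (I := I) (by omega)
      omega
  refine ⟨?_, ?_, ?_, ?_, ?_, ?_, ?_⟩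
  -- zero_iff
  · intro N hN I X
    exact ⟨fun h => by by_contra hX; exact hpos N hN I X hX h, hzero N I X⟩
  -- one_iff
  · intro N hN I X
    refine ⟨?_, hone N I X⟩
    intro h
    by_contra hr
    have hX : X ≠ 0 := by
      intro h0
      rw [hzero N I X h0] at h
      omega
    rcases QZCaux.card_two_cases hN hX hr with ⟨n₁, n₂, hne, hI1, hI2, h1⟩ | h3
    · rw [htwo N I X n₁ n₂ hne hI1 hI2 h1 hX hr] at h
      obtain ⟨u, v, hu, hv, huv⟩ := matRank_one_decomp _ h
      apply hr
      apply QZCaux.isRankOne_two hne (QZCaux.dim_pos hX) u v hu hv X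
      intro i
      rw [← huv (i n₁) (i n₂)]
      exact (QZCaux.twoModeMatrix_apply_val X n₁ n₂ hne h1 (i n₁) (i n₂) i rfl rfl).symm
    · rw [hthree N I X hX hr h3] at h
      have := QZCaux.two_le_sup (I := I) (by omega)
      omega
  -- id_eq
  · intro M N hN2
    have hN : 0 < N := by omega
    rcases Nat.lt_or_ge M 2 with hM | hM
    · interval_cases M
      · exact hzero N _ _ (QZCaux.tensor_eq_zero _ ⟨0, hN⟩ rfl)
      · apply hone
        refine ⟨fun n _ => 1, fun n => ?_, fun i => ?_⟩
        · intro h0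
          have := congrFun h0 ⟨0, by simp⟩
          simpa using this
        · simp only [idTensor]
          rw [if_pos (fun n m => Subsingleton.elim _ _)]
          simp
    · -- M ≥ 2
      have hXne : idTensor M N ≠ 0 := by
        intro h
        have := congrFun h (fun _ => (⟨0, by omega⟩ : Fin M))
        rw [idTensor, if_pos (fun n m => rfl)] at this
        simpa using this
      have hr : ¬ IsRankOne (idTensor M N) := by
        rintro ⟨a, ha, hXa⟩
        have hdiag : ∀ (j : Fin M) (n : Fin N), a n j ≠ 0 := by
          intro j n h0
          have h1 : idTensor M N (fun _ => j) = 1 := by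
            rw [idTensor, if_pos (fun _ _ => rfl)]
          rw [hXa, Finset.prod_eq_zero (Finset.mem_univ n) h0] at h1
          exact one_ne_zero h1.symm
        have hz : idTensor M N (fun n => if n = (⟨0, by omega⟩ : Fin N)
            then (⟨0, by omega⟩ : Fin M) else (⟨1, by omega⟩ : Fin M)) = 0 := by
          rw [idTensor, if_neg]
          intro hall
          have h01 := hall ⟨0, by omega⟩ ⟨1, by omega⟩
          simp [Fin.ext_iff] at h01
        rw [hXa] at hz
        exact (Finset.prod_ne_zero_iff.mpr fun n _ => hdiag _ n) hz
      rcases eq_or_lt_of_le hN2 with hN2' | hN3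
      · -- N = 2
        subst hN2'
        set n₁ : Fin 2 := ⟨0, by omega⟩ with hn₁
        set n₂ : Fin 2 := ⟨1, by omega⟩ with hn₂
        have hne : n₁ ≠ n₂ := by simp [hn₁, hn₂, Fin.ext_iff]
        have h1 : ∀ m : Fin 2, m ≠ n₁ → m ≠ n₂ → (fun _ => M) m = 1 := by
          intro m hm1 hm2
          exfalso
          have h0 : m.val ≠ 0 := fun hh => hm1 (Fin.ext hh)
          have h1' : m.val ≠ 1 := fun hh => hm2 (Fin.ext hh)
          have := m.isLt
          omega
        rw [htwo 2 _ _ n₁ n₂ hne hM hM h1 hXne hr]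
        have hmat : twoModeMatrix (idTensor M 2) n₁ n₂ h1 = (1 : Matrix (Fin M) (Fin M) ℝ) := by
          ext p q
          rw [QZCaux.twoModeMatrix_apply_val _ n₁ n₂ hne h1 p q
            (fun n => if n = n₁ then p else q) (by simp) (by simp [hne, Ne.symm hne])]
          rw [idTensor, Matrix.one_apply]
          by_cases hpq : p = q
          · subst hpq
            rw [if_pos (fun n m => by simp), if_pos rfl]
          · rw [if_neg, if_neg hpq]
            intro hall
            have := hall n₁ n₂
            simp [hne, Ne.symm hne] at this
            exact hpq this
        rw [hmat, Matrix.rank_one]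
        simp
      · -- N ≥ 3
        rw [hthree N _ _ hXne hr ?_]
        · exact Finset.sup_const (Finset.univ_nonempty_iff.mpr ⟨⟨0, hN⟩⟩) M
        · have hfe : (Finset.univ.filter fun _ : Fin N => 1 < M) = Finset.univ := by
            apply Finset.filter_true_of_mem
            intro _ _
            omega
          rw [hfe, Finset.card_univ, Fintype.card_fin]
          omega
  -- matrix_eq
  · intro N h2 I h1 X
    by_cases hX0 : X = 0
    · subst hX0
      rw [hzero N I 0 rfl]
      have hm0 : assocMatrix h2 h1 (0 : Tensor N I) = 0 := by
        ext p q
        rfl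
      rw [hm0, Matrix.rank_zero]
    have hN : 0 < N := by omega
    set n₁ : Fin N := ⟨0, by omega⟩ with hn₁
    set n₂ : Fin N := ⟨1, by omega⟩ with hn₂
    have hne : n₁ ≠ n₂ := by simp [hn₁, hn₂, Fin.ext_iff]
    have hpos : ∀ m, 0 < I m := QZCaux.dim_pos hX0
    set base : (m : Fin N) → Fin (I m) := fun m => ⟨0, hpos m⟩ with hbase
    by_cases hr : IsRankOne X
    · rw [hone N I X hr]
      obtain ⟨a, ha, hXa⟩ := hr
      set s := (Finset.univ.erase n₁).erase n₂ with hs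
      set c : ℝ := ∏ m ∈ s, a m (base m) with hc
      have hmat : assocMatrix h2 h1 X = Matrix.of (fun p q => a n₁ p * (a n₂ q * c)) := by
        ext p q
        rw [QZCaux.assocMatrix_apply_val h2 h1 X p q
          (Function.update (Function.update base n₁ p) n₂ q)
          (by show ((Function.update (Function.update base n₁ p) n₂ q) n₁).val = p.val
              rw [Function.update_of_ne hne, Function.update_self])
          (by show ((Function.update (Function.update base n₁ p) n₂ q) n₂).val = q.val
              rw [Function.update_self])]
        rw [hXa, QZCaux.prod_split_two hne, mul_assoc]
        congr 1
        rw [Function.update_self]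
        congr 1
        rw [hc, hs]
        apply Finset.prod_congr rfl
        intro m hm
        rw [Finset.mem_erase, Finset.mem_erase] at hm
        apply congrArg
        rw [Function.update_of_ne hm.1, Function.update_of_ne hm.2.1]
      have hc0 : c ≠ 0 := by
        rw [hc]
        apply Finset.prod_ne_zero_iff.mpr
        intro m hm
        rw [hs, Finset.mem_erase, Finset.mem_erase] at hm
        have hm1 : I m = 1 := by
          apply h1 m
          have h0' : m.val ≠ 0 := fun hh => hm.2.1 (Fin.ext hh)
          have h1' : m.val ≠ 1 := fun hh => hm.1 (Fin.ext hh)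
          omega
        intro h0
        apply ha m
        funext k
        have : k = base m := by
          apply Fin.ext
          have := k.isLt
          simp only [hbase]
          omega
        rw [this, h0]
        rfl
      rw [hmat]
      refine (matRank_outer _ _ (ha n₁) ?_).symm
      intro h0
      obtain ⟨k, hk⟩ := Function.ne_iff.mp (ha n₂)
      have := congrFun h0 k
      simp only [Pi.zero_apply, mul_eq_zero] at this
      exact this.elim hk hc0
    · -- two-mode case
      have hI01 : 1 < I n₁ ∧ 1 < I n₂ := by
        rcases QZCaux.card_two_cases hN hX0 hr with ⟨a, b, hne', hIa, hIb, _⟩ | h3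
        · have ha2 : a.val < 2 := by
            by_contra hc'
            push_neg at hc'
            rw [h1 a hc'] at hIa
            omega
          have hb2 : b.val < 2 := by
            by_contra hc'
            push_neg at hc'
            rw [h1 b hc'] at hIb
            omega
          have hab : a.val ≠ b.val := fun hh => hne' (Fin.ext hh)
          constructor
          · have hor : a.val = 0 ∨ b.val = 0 := by omega
            rcases hor with h' | h'
            · rw [show n₁ = a from Fin.ext (by simp [hn₁, h'])]; exact hIa
            · rw [show n₁ = b from Fin.ext (by simp [hn₁, h'])]; exact hIb
          · have hor : a.val = 1 ∨ b.val = 1 := by omega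
            rcases hor with h' | h'
            · rw [show n₂ = a from Fin.ext (by simp [hn₂, h'])]; exact hIa
            · rw [show n₂ = b from Fin.ext (by simp [hn₂, h'])]; exact hIb
        · exfalso
          have hsub : (Finset.univ.filter fun m : Fin N => 1 < I m) ⊆ {n₁, n₂} := by
            intro m hm
            rw [Finset.mem_filter] at hm
            have hv : m.val < 2 := by
              by_contra hc'
              push_neg at hc'
              rw [h1 m hc'] at hm
              omega
            have hv' : m.val = 0 ∨ m.val = 1 := by omega
            rcases hv' with h' | h'
            · simp [Finset.mem_insert]
              left; exact Fin.ext (by simp [hn₁, h'])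
            · simp [Finset.mem_insert]
              right; exact Fin.ext (by simp [hn₂, h'])
          have hcard := Finset.card_le_card hsub
          have : ({n₁, n₂} : Finset (Fin N)).card ≤ 2 :=
            le_trans (Finset.card_insert_le _ _) (by simp)
          omega
      have h1' : ∀ m, m ≠ n₁ → m ≠ n₂ → I m = 1 := by
        intro m hm1 hm2
        apply h1 m
        have h0' : m.val ≠ 0 := fun hh => hm1 (Fin.ext hh)
        have h1'' : m.val ≠ 1 := fun hh => hm2 (Fin.ext hh)
        omega
      rw [htwo N I X n₁ n₂ hne hI01.1 hI01.2 h1' hX0 hr]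
      have hmm : twoModeMatrix X n₁ n₂ h1' = assocMatrix h2 h1 X := by
        ext p q
        rw [QZCaux.twoModeMatrix_apply_val X n₁ n₂ hne h1' p q
          (Function.update (Function.update base n₁ p) n₂ q)
          (by rw [Function.update_of_ne hne, Function.update_self])
          (by rw [Function.update_self])]
        rw [QZCaux.assocMatrix_apply_val h2 h1 X p q
          (Function.update (Function.update base n₁ p) n₂ q)
          (by show ((Function.update (Function.update base n₁ p) n₂ q) n₁).val = p.val
              rw [Function.update_of_ne hne, Function.update_self])
          (by show ((Function.update (Function.update base n₁ p) n₂ q) n₂).val = q.val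
              rw [Function.update_self])]
      rw [hmm]
  -- smul_eq
  · intro N hN I α hα X
    by_cases hX0 : X = 0
    · subst hX0
      rw [smul_zero, hzero N I 0 rfl]
    by_cases hr : IsRankOne X
    · rw [hone N I X hr, hone N I _ (QZCaux.isRankOne_smul hα hN hr)]
    have hX0' : α • X ≠ 0 := fun h => hX0 ((QZCaux.smul_eq_zero_iff' hα X).mp h)
    have hr' : ¬ IsRankOne (α • X) := fun h => hr ((QZCaux.isRankOne_smul_iff hα hN).mp h)
    rcases QZCaux.card_two_cases hN hX0 hr with ⟨n₁, n₂, hne, hI1, hI2, h1⟩ | h3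
    · rw [htwo N I X n₁ n₂ hne hI1 hI2 h1 hX0 hr,
        htwo N I (α • X) n₁ n₂ hne hI1 hI2 h1 hX0' hr']
      have hsm : twoModeMatrix (α • X) n₁ n₂ h1 = α • twoModeMatrix X n₁ n₂ h1 := by
        ext p q
        rfl
      rw [hsm, matRank_smul _ hα]
    · rw [hthree N I X hX0 hr h3, hthree N I (α • X) hX0' hr' h3]
  -- perm_eq
  · intro N hN I π X
    by_cases hX0 : X = 0
    · subst hX0
      rw [hzero N I 0 rfl]
      exact hzero N _ _ ((QZCaux.permute_zero_iff π 0).mpr rfl)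
    by_cases hr : IsRankOne X
    · rw [hone N I X hr, hone N _ _ ((QZCaux.isRankOne_permute_iff π X).mpr hr)]
    have hP0 : permute I π X ≠ 0 := fun h => hX0 ((QZCaux.permute_zero_iff π X).mp h)
    have hPr : ¬ IsRankOne (permute I π X) := fun h => hr ((QZCaux.isRankOne_permute_iff π X).mp h)
    rcases QZCaux.card_two_cases hN hX0 hr with ⟨n₁, n₂, hne, hI1, hI2, h1⟩ | h3
    · set m₁ := π.symm n₁ with hm₁
      set m₂ := π.symm n₂ with hm₂
      have hm : m₁ ≠ m₂ := fun h => hne (π.symm.injective h)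
      have e₁ : I (π m₁) = I n₁ := by rw [hm₁, π.apply_symm_apply]
      have e₂ : I (π m₂) = I n₂ := by rw [hm₂, π.apply_symm_apply]
      have hJ1 : 1 < I (π m₁) := by rw [e₁]; exact hI1
      have hJ2 : 1 < I (π m₂) := by rw [e₂]; exact hI2
      have h1' : ∀ m, m ≠ m₁ → m ≠ m₂ → I (π m) = 1 := by
        intro m hma hmb
        apply h1 (π m)
        · intro h'
          exact hma (by rw [hm₁, ← h', π.symm_apply_apply])
        · intro h'
          exact hmb (by rw [hm₂, ← h', π.symm_apply_apply])
      rw [htwo N _ (permute I π X) m₁ m₂ hm hJ1 hJ2 h1' hP0 hPr,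
        htwo N I X n₁ n₂ hne hI1 hI2 h1 hX0 hr]
      have hMM : twoModeMatrix (permute I π X) m₁ m₂ h1' =
          (twoModeMatrix X n₁ n₂ h1).submatrix (finCongr e₁) (finCongr e₂) := by
        ext p q
        rw [Matrix.submatrix_apply]
        set i : (n : Fin N) → Fin (I n) :=
          Function.update (Function.update (fun m => ⟨0, QZCaux.dim_pos hX0 m⟩) n₁
            (finCongr e₁ p)) n₂ (finCongr e₂ q) with hi
        rw [QZCaux.twoModeMatrix_apply_val X n₁ n₂ hne h1 _ _ i
          (by rw [hi, Function.update_of_ne hne, Function.update_self])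
          (by rw [hi, Function.update_self])]
        rw [QZCaux.twoModeMatrix_apply_val (permute I π X) m₁ m₂ hm h1' p q
          (fun m => i (π m)) ?_ ?_]
        · show X _ = X i
          apply QZCaux.apply_eq
          intro m
          simp only [Fin.coe_cast]
          exact QZCaux.apply_cast _ (π.apply_symm_apply m)
        · have : (i (π m₁)).val = (i n₁).val := QZCaux.apply_cast i (by rw [hm₁, π.apply_symm_apply])
          rw [this, hi, Function.update_of_ne hne, Function.update_self]
          rfl
        · have : (i (π m₂)).val = (i n₂).val := QZCaux.apply_cast i (by rw [hm₂, π.apply_symm_apply])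
          rw [this, hi, Function.update_self]
          rfl
      rw [hMM, matRank_submatrix_equiv]
    · rw [hthree N I X hX0 hr h3, hthree N _ (permute I π X) hP0 hPr
        (by rw [QZCaux.card_filter_permute π]; exact h3)]
      exact QZCaux.sup_permute π
  -- subtensor_le
  · intro N hN I J X Y hsub
    by_cases hY0 : Y = 0
    · rw [hzero N J Y hY0]
      omega
    obtain ⟨f, hf, hYX⟩ := hsub
    have hX0 : X ≠ 0 := by
      obtain ⟨i, hi⟩ := QZCaux.exists_ne_zero hY0
      intro h0
      apply hi
      rw [hYX i, h0]
      rfl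
    have hJI : ∀ n, J n ≤ I n := by
      intro n
      have := Fintype.card_le_of_injective (f n) (hf n).injective
      simpa using this
    by_cases hrY : IsRankOne Y
    · rw [hone N J Y hrY]
      have := hpos N hN I X hX0
      omega
    have hrX : ¬ IsRankOne X := fun h => hrY (QZCaux.isRankOne_subtensor ⟨f, hf, hYX⟩ hY0 h)
    have hsubS : (Finset.univ.filter fun m : Fin N => 1 < J m) ⊆
        (Finset.univ.filter fun m : Fin N => 1 < I m) := by
      intro m hm
      rw [Finset.mem_filter] at hm ⊢
      exact ⟨hm.1, lt_of_lt_of_le hm.2 (hJI m)⟩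
    rcases QZCaux.card_two_cases hN hY0 hrY with ⟨n₁, n₂, hne, hJ1, hJ2, h1Y⟩ | h3Y
    · rw [htwo N J Y n₁ n₂ hne hJ1 hJ2 h1Y hY0 hrY]
      have hI1 : 1 < I n₁ := lt_of_lt_of_le hJ1 (hJI n₁)
      have hI2 : 1 < I n₂ := lt_of_lt_of_le hJ2 (hJI n₂)
      rcases QZCaux.card_two_cases hN hX0 hrX with ⟨a, b, hneab, hIa, hIb, h1X⟩ | h3X
      · -- {a,b} = {n₁,n₂}
        have hmemI : ∀ m : Fin N, 1 < I m → m = a ∨ m = b := by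
          intro m hm
          by_contra hc'
          push_neg at hc'
          rw [h1X m hc'.1 hc'.2] at hm
          omega
        have h1X' : ∀ m, m ≠ n₁ → m ≠ n₂ → I m = 1 := by
          rcases hmemI n₁ hI1 with h' | h' <;> rcases hmemI n₂ hI2 with h'' | h''
          · exact absurd (h'.trans h''.symm) hne
          · intro m hm1 hm2
            apply h1X m (by rw [← h']; exact hm1) (by rw [← h'']; exact hm2)
          · intro m hm1 hm2
            apply h1X m (by rw [← h'']; exact hm2) (by rw [← h']; exact hm1)
          · exact absurd (h'.trans h''.symm) hne
        rw [htwo N I X n₁ n₂ hne hI1 hI2 h1X' hX0 hrX]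
        have hMM : twoModeMatrix Y n₁ n₂ h1Y =
            (twoModeMatrix X n₁ n₂ h1X').submatrix (f n₁) (f n₂) := by
          ext p q
          rw [Matrix.submatrix_apply]
          set i : (n : Fin N) → Fin (J n) :=
            Function.update (Function.update (fun m => ⟨0, QZCaux.dim_pos hY0 m⟩) n₁ p) n₂ q
            with hi
          rw [QZCaux.twoModeMatrix_apply_val Y n₁ n₂ hne h1Y p q i
            (by rw [hi, Function.update_of_ne hne, Function.update_self])
            (by rw [hi, Function.update_self])]
          rw [QZCaux.twoModeMatrix_apply_val X n₁ n₂ hne h1X' (f n₁ p) (f n₂ q)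
            (fun m => f m (i m))
            (by have hip : i n₁ = p := by rw [hi, Function.update_of_ne hne, Function.update_self]
                show (f n₁ (i n₁)).val = (f n₁ p).val
                rw [hip])
            (by have hiq : i n₂ = q := by rw [hi, Function.update_self]
                show (f n₂ (i n₂)).val = (f n₂ q).val
                rw [hiq])]
          exact hYX i
        rw [hMM]
        exact matRank_submatrix_le _ _ _
      · rw [hthree N I X hX0 hrX h3X]
        calc (twoModeMatrix Y n₁ n₂ h1Y).rank
            ≤ Fintype.card (Fin (J n₁)) := Matrix.rank_le_card_height _
          _ = J n₁ := Fintype.card_fin _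
          _ ≤ I n₁ := hJI n₁
          _ ≤ Finset.univ.sup I := Finset.le_sup (Finset.mem_univ n₁)
    · have h3X : 3 ≤ (Finset.univ.filter fun m : Fin N => 1 < I m).card :=
        le_trans h3Y (Finset.card_le_card hsubS)
      rw [hthree N J Y hY0 hrY h3Y, hthree N I X hX0 hrX h3X]
      exact Finset.sup_mono_fun (fun n _ => hJI n)
end
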